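/- arXiv:0902.1715 — 6 statements merged into one kernel-verified Lean document; each statement's English description precedes it below -/
import Mathlib

section
/- For infinitely many positive integers t, the on-line Ramsey number of the complete graph K_t satisfies r̃(t) ≤ 1.001^{-t} · C(r(t), 2), where r(t) is the diagonal Ramsey number and C(n,2) = n(n-1)/2. Formally: for every t₀ there exists t ≥ t₀ with (r̃(t) : ℝ) ≤ 1.001^{-t} · (r(t) choose 2). -/
/-- A monochromatic clique of size `k` in colour `i` for an edge-colouring `c` of `K_n`. -/
def monoClique {n q : ℕ} (c : Sym2 (Fin n) → Fin q) (i : Fin q) (k : ℕ) : Prop :=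
  ∃ A : Finset (Fin n), A.card = k ∧ ∀ u ∈ A, ∀ v ∈ A, u ≠ v → c s(u, v) = i

/-- The `q`-colour Ramsey number `r(k 0, …, k (q-1))`. -/
noncomputable def ramseyQ {q : ℕ} (k : Fin q → ℕ) : ℕ :=
  sInf {n : ℕ | ∀ c : Sym2 (Fin n) → Fin q, ∃ i : Fin q, monoClique c i (k i)}

/-- The two-colour Ramsey number `r(s, t)`. -/
noncomputable def ramsey2 (s t : ℕ) : ℕ := ramseyQ ![s, t]

/-- A history in the on-line Ramsey game: the previously presented edges with their colours. -/
abbrev History (q : ℕ) := List (Sym2 ℕ × Fin q)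

/-- A Builder strategy is valid if it always presents a genuine new edge. -/
def validBuilder {q : ℕ} (B : History q → Sym2 ℕ) : Prop :=
  ∀ h : History q, ¬ (B h).IsDiag ∧ B h ∉ h.map Prod.fst

/-- The play determined by a Builder strategy `B` and a Painter strategy `P`:
`play B P n` is the history after `n` rounds. -/
def play {q : ℕ} (B : History q → Sym2 ℕ) (P : History q → Sym2 ℕ → Fin q) : ℕ → History q
  | 0 => []
  | n + 1 =>
      let h := play B P n
      h ++ [(B h, P h (B h))]

/-- The graph formed by the edges of colour `i` in a history. -/
def colourGraph {q : ℕ} (h : History q) (i : Fin q) : SimpleGraph ℕ :=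
  SimpleGraph.fromEdgeSet {e | (e, i) ∈ h}

/-- `H` contains a copy of `G` as a subgraph. -/
def containsCopy {V : Type*} (G : SimpleGraph V) (H : SimpleGraph ℕ) : Prop :=
  ∃ f : V → ℕ, Function.Injective f ∧ ∀ u v, G.Adj u v → H.Adj (f u) (f v)

/-- The `q`-colour on-line Ramsey number of `G`: the least `N` such that Builder has a
valid strategy forcing, against every Painter strategy, a monochromatic copy of `G`
within at most `N` rounds. -/
noncomputable def onlineRamsey {V : Type*} (q : ℕ) (G : SimpleGraph V) : ℕ :=
  sInf {N : ℕ | ∃ B : History q → Sym2 ℕ, validBuilder B ∧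
    ∀ P : History q → Sym2 ℕ → Fin q,
      ∃ n ≤ N, ∃ i : Fin q, containsCopy G (colourGraph (play B P n) i)}

/-- `K_n` arrow `(a,b)`. -/
def rProp (a b n : ℕ) : Prop :=
  ∀ c : Sym2 (Fin n) → Fin 2, ∃ i : Fin 2, monoClique c i (![a, b] i)

lemma ramsey2_eq (a b : ℕ) : ramsey2 a b = sInf {n | rProp a b n} := rfl

lemma fin2cases (i : Fin 2) : i = 0 ∨ i = 1 := by
  rcases i with ⟨_ | _, h⟩
  · exact Or.inl rfl
  · exact Or.inr (by ext; simp; omega)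

/-- transfer a mono clique along an injection. -/
lemma mono_of_map {k n j : ℕ} (g : Fin k → Fin n) (hg : Function.Injective g)
    (c : Sym2 (Fin n) → Fin 2) (i : Fin 2) (S : Finset (Fin n)) (hgS : ∀ x, g x ∈ S)
    (h : monoClique (fun e => c (Sym2.map g e)) i j) :
    ∃ A : Finset (Fin n), A.card = j ∧ A ⊆ S ∧
      ∀ u ∈ A, ∀ v ∈ A, u ≠ v → c s(u, v) = i := by
  obtain ⟨A, hcard, hmono⟩ := h
  refine ⟨A.image g, by rw [Finset.card_image_of_injective _ hg, hcard], ?_, ?_⟩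
  · intro x hx
    obtain ⟨u, _, rfl⟩ := Finset.mem_image.1 hx
    exact hgS u
  · intro u hu v hv huv
    obtain ⟨u', hu', rfl⟩ := Finset.mem_image.1 hu
    obtain ⟨v', hv', rfl⟩ := Finset.mem_image.1 hv
    have h1 : u' ≠ v' := fun h => huv (by rw [h])
    have := hmono u' hu' v' hv' h1
    simpa using this

lemma rProp_mono_n {a b n n' : ℕ} (h : rProp a b n) (hnn : n ≤ n') : rProp a b n' := by
  intro c
  obtain ⟨i, hi⟩ := h (fun e => c (Sym2.map (Fin.castLE hnn) e))
  obtain ⟨A, hcard, hS, hmono⟩ := mono_of_map (Fin.castLE hnn) (Fin.castLE_injective hnn)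
    c i Finset.univ (fun _ => Finset.mem_univ _) hi
  exact ⟨i, A, hcard, hmono⟩

/-- Erdős–Szekeres bound. -/
def ES : ℕ → ℕ → ℕ
  | 0, _ => 1
  | _, 0 => 1
  | a + 1, b + 1 => if a = 0 then 1 else if b = 0 then 1 else ES a (b+1) + ES (a+1) b

lemma ES_pos (a b : ℕ) : 1 ≤ ES a b := by
  induction a generalizing b with
  | zero => simp [ES]
  | succ a ih =>
      cases b with
      | zero => simp [ES]
      | succ b =>
          rw [ES]
          split
          · omega
          · split
            · omega
            · have := ih (b+1); omega

lemma rProp_empty_left {b n : ℕ} : rProp 0 b n := by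
  intro c
  exact ⟨0, ∅, by simp, by simp⟩

lemma rProp_empty_right {a n : ℕ} : rProp a 0 n := by
  intro c
  exact ⟨1, ∅, by simp, by simp⟩

lemma rProp_one_left {b n : ℕ} (hn : 1 ≤ n) : rProp 1 b n := by
  intro c
  refine ⟨0, {⟨0, hn⟩}, by simp, ?_⟩
  intro u hu v hv huv
  simp only [Finset.mem_singleton] at hu hv
  exact absurd (hu.trans hv.symm) huv

lemma rProp_one_right {a n : ℕ} (hn : 1 ≤ n) : rProp a 1 n := by
  intro c
  refine ⟨1, {⟨0, hn⟩}, by simp, ?_⟩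
  intro u hu v hv huv
  simp only [Finset.mem_singleton] at hu hv
  exact absurd (hu.trans hv.symm) huv

lemma rProp_ES : ∀ a b : ℕ, rProp a b (ES a b) := by
  have main : ∀ N a b, a + b ≤ N → rProp a b (ES a b) := by
    intro N
    induction N with
    | zero =>
        intro a b hab
        have ha : a = 0 := by omega
        subst ha; exact rProp_empty_left
    | succ N ih =>
        intro a b hab
        match a, b with
        | 0, b => exact rProp_empty_left
        | a, 0 => exact rProp_empty_right
        | 1, b => exact rProp_one_left (ES_pos 1 b)
        | a, 1 => exact rProp_one_right (ES_pos a 1)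
        | (a+2), (b+2) =>
        -- the inductive step
        have hES : ES (a+2) (b+2) = ES (a+1) (b+2) + ES (a+2) (b+1) := by
          rw [ES]; simp
        set n := ES (a+2) (b+2) with hn
        set n₁ := ES (a+1) (b+2) with hn1
        set n₂ := ES (a+2) (b+1) with hn2
        intro c
        have hnpos : 1 ≤ n := ES_pos _ _
        set v : Fin n := ⟨0, hnpos⟩ with hv
        set NR : Finset (Fin n) := Finset.univ.filter (fun w => w ≠ v ∧ c s(v, w) = 0) with hNR
        set NB : Finset (Fin n) := Finset.univ.filter (fun w => w ≠ v ∧ c s(v, w) = 1) with hNB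
        have hsplit : n₁ ≤ NR.card ∨ n₂ ≤ NB.card := by
          by_contra hcon
          push_neg at hcon
          have hdisj : Disjoint NR NB := by
            rw [Finset.disjoint_left]
            intro x hx hx'
            rw [hNR, Finset.mem_filter] at hx
            rw [hNB, Finset.mem_filter] at hx'
            have := hx.2.2
            have := hx'.2.2
            simp_all
          have hcup : NR ∪ NB = Finset.univ.erase v := by
            ext x
            simp only [hNR, hNB, Finset.mem_union, Finset.mem_filter, Finset.mem_univ,
              true_and, Finset.mem_erase, and_true]
            constructor
            · rintro (⟨h1, _⟩ | ⟨h1, _⟩) <;> exact h1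
            · intro hx
              rcases fin2cases (c s(v, x)) with h | h
              · exact Or.inl ⟨hx, h⟩
              · exact Or.inr ⟨hx, h⟩
          have hcard : NR.card + NB.card = n - 1 := by
            rw [← Finset.card_union_of_disjoint hdisj, hcup, Finset.card_erase_of_mem
              (Finset.mem_univ v), Finset.card_univ, Fintype.card_fin]
          omega
        rcases hsplit with hle | hle
        · -- red neighbourhood is big
          set g : Fin n₁ → Fin n := fun j => NR.orderEmbOfFin rfl (Fin.castLE hle j) with hg
          have hginj : Function.Injective g := by
            intro x y hxy
            have := (NR.orderEmbOfFin rfl).injective hxy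
            exact Fin.castLE_injective hle this
          have hgmem : ∀ x, g x ∈ NR := fun x => Finset.orderEmbOfFin_mem _ rfl _
          obtain ⟨i, hi⟩ := ih (a+1) (b+2) (by omega) (fun e => c (Sym2.map g e))
          rcases fin2cases i with rfl | rfl
          · obtain ⟨A, hcard, hAS, hmono⟩ := mono_of_map g hginj c 0 NR hgmem hi
            refine ⟨0, insert v A, ?_, ?_⟩
            · rw [Finset.card_insert_of_notMem, hcard]
              · simp
              · intro hvA
                have := hAS hvA
                rw [hNR, Finset.mem_filter] at this
                exact this.2.1 rfl
            · intro x hx y hy hxy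
              rcases Finset.mem_insert.1 hx with rfl | hx' <;>
                rcases Finset.mem_insert.1 hy with rfl | hy'
              · exact absurd rfl hxy
              · have := hAS hy'
                rw [hNR, Finset.mem_filter] at this
                exact this.2.2
              · have hone := hAS hx'
                rw [hNR, Finset.mem_filter] at hone
                rw [Sym2.eq_swap]
                exact hone.2.2
              · exact hmono x hx' y hy' hxy
          · obtain ⟨A, hcard, hAS, hmono⟩ := mono_of_map g hginj c 1 NR hgmem hi
            refine ⟨1, A, ?_, hmono⟩
            simpa using hcard
        · -- blue neighbourhood is big
          set g : Fin n₂ → Fin n := fun j => NB.orderEmbOfFin rfl (Fin.castLE hle j) with hg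
          have hginj : Function.Injective g := by
            intro x y hxy
            have := (NB.orderEmbOfFin rfl).injective hxy
            exact Fin.castLE_injective hle this
          have hgmem : ∀ x, g x ∈ NB := fun x => Finset.orderEmbOfFin_mem _ rfl _
          obtain ⟨i, hi⟩ := ih (a+2) (b+1) (by omega) (fun e => c (Sym2.map g e))
          rcases fin2cases i with rfl | rfl
          · obtain ⟨A, hcard, hAS, hmono⟩ := mono_of_map g hginj c 0 NB hgmem hi
            refine ⟨0, A, ?_, hmono⟩
            simpa using hcard
          · obtain ⟨A, hcard, hAS, hmono⟩ := mono_of_map g hginj c 1 NB hgmem hi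
            refine ⟨1, insert v A, ?_, ?_⟩
            · rw [Finset.card_insert_of_notMem, hcard]
              · simp
              · intro hvA
                have := hAS hvA
                rw [hNB, Finset.mem_filter] at this
                exact this.2.1 rfl
            · intro x hx y hy hxy
              rcases Finset.mem_insert.1 hx with rfl | hx' <;>
                rcases Finset.mem_insert.1 hy with rfl | hy'
              · exact absurd rfl hxy
              · have := hAS hy'
                rw [hNB, Finset.mem_filter] at this
                exact this.2.2
              · have hone := hAS hx'
                rw [hNB, Finset.mem_filter] at hone
                rw [Sym2.eq_swap]
                exact hone.2.2
              · exact hmono x hx' y hy' hxy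
  intro a b
  exact main (a + b) a b le_rfl

lemma ramseySet_nonempty (a b : ℕ) : {n | rProp a b n}.Nonempty :=
  ⟨ES a b, rProp_ES a b⟩

lemma ramsey2_spec (a b : ℕ) : rProp a b (ramsey2 a b) := by
  rw [ramsey2_eq]
  exact Nat.sInf_mem (ramseySet_nonempty a b)

lemma ramsey2_le {a b n : ℕ} (h : rProp a b n) : ramsey2 a b ≤ n := by
  rw [ramsey2_eq]; exact Nat.sInf_le h

lemma rProp_of_le {a b n : ℕ} (h : ramsey2 a b ≤ n) : rProp a b n :=
  rProp_mono_n (ramsey2_spec a b) h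

lemma ramsey2_le_ES (a b : ℕ) : ramsey2 a b ≤ ES a b := ramsey2_le (rProp_ES a b)

lemma monoClique_mono {n : ℕ} {c : Sym2 (Fin n) → Fin 2} {i : Fin 2} {k k' : ℕ}
    (hk : k' ≤ k) (h : monoClique c i k) : monoClique c i k' := by
  obtain ⟨A, hA, hmono⟩ := h
  obtain ⟨A', hsub, hcard⟩ := Finset.exists_subset_card_eq (by omega : k' ≤ A.card)
  exact ⟨A', hcard, fun u hu v hv huv => hmono u (hsub hu) v (hsub hv) huv⟩

lemma ramsey2_mono {a b a' b' : ℕ} (ha : a ≤ a') (hb : b ≤ b') :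
    ramsey2 a b ≤ ramsey2 a' b' := by
  refine ramsey2_le ?_
  intro c
  obtain ⟨i, hi⟩ := ramsey2_spec a' b' c
  rcases fin2cases i with rfl | rfl
  · exact ⟨0, monoClique_mono (by simpa using ha) (by simpa using hi)⟩
  · exact ⟨1, monoClique_mono (by simpa using hb) (by simpa using hi)⟩

lemma ramsey2_two_left {b : ℕ} (hb : 1 ≤ b) : ramsey2 2 b ≤ b := by
  refine ramsey2_le ?_
  intro c
  by_cases h : ∃ u : Fin b, ∃ v : Fin b, u ≠ v ∧ c s(u,v) = 0
  · obtain ⟨u, v, huv, hc⟩ := h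
    refine ⟨0, {u, v}, by rw [Finset.card_insert_of_notMem (by simpa using huv)]; simp, ?_⟩
    intro x hx y hy hxy
    simp only [Finset.mem_insert, Finset.mem_singleton] at hx hy
    rcases hx with rfl | rfl <;> rcases hy with rfl | rfl
    · exact absurd rfl hxy
    · simpa using hc
    · rw [Sym2.eq_swap]; simpa using hc
    · exact absurd rfl hxy
  · push_neg at h
    refine ⟨1, Finset.univ, by simp, ?_⟩
    intro x _ y _ hxy
    rcases fin2cases (c s(x,y)) with h0 | h1
    · exact absurd h0 (h x y hxy)
    · simpa using h1
lemma ramsey2_two_right {a : ℕ} (ha : 1 ≤ a) : ramsey2 a 2 ≤ a := by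
  refine ramsey2_le ?_
  intro c
  by_cases h : ∃ u : Fin a, ∃ v : Fin a, u ≠ v ∧ c s(u,v) = 1
  · obtain ⟨u, v, huv, hc⟩ := h
    refine ⟨1, {u, v}, by rw [Finset.card_insert_of_notMem (by simpa using huv)]; simp, ?_⟩
    intro x hx y hy hxy
    simp only [Finset.mem_insert, Finset.mem_singleton] at hx hy
    rcases hx with rfl | rfl <;> rcases hy with rfl | rfl
    · exact absurd rfl hxy
    · simpa using hc
    · rw [Sym2.eq_swap]; simpa using hc
    · exact absurd rfl hxy
  · push_neg at h
    refine ⟨0, Finset.univ, by simp, ?_⟩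
    intro x _ y _ hxy
    rcases fin2cases (c s(x,y)) with h0 | h1
    · simpa using h0
    · exact absurd h1 (h x y hxy)

lemma two_pow_le_factorial {u : ℕ} (hu : 4 ≤ u) : 2 ^ u ≤ u.factorial := by
  induction u with
  | zero => omega
  | succ n ih =>
      rcases Nat.lt_or_ge n 4 with h | h
      · have hn3 : n = 3 := by omega
        subst hn3; decide
      · rw [pow_succ, Nat.factorial_succ]
        have := ih h
        have h2 : 2 ≤ n + 1 := by omega
        calc 2 ^ n * 2 ≤ n.factorial * 2 := by exact Nat.mul_le_mul_right _ this
          _ ≤ (n+1) * n.factorial := by rw [Nat.mul_comm]; exact Nat.mul_le_mul_right _ h2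

lemma offdiag_card {n u : ℕ} (A : Finset (Fin n)) (hA : A.card = u) :
    ((A.sym2).filter (fun e => ¬ e.IsDiag)).card = (u+1).choose 2 - u := by
  have hsym : (A.sym2).card = (u+1).choose 2 := by rw [Finset.card_sym2, hA]
  have hdiag : ((A.sym2).filter (fun e => e.IsDiag)).card = u := by
    have himg : (A.sym2).filter (fun e => e.IsDiag) = A.image (fun x => s(x,x)) := by
      ext e
      induction e with
      | _ x y =>
        simp only [Finset.mem_filter, Finset.mk_mem_sym2_iff, Sym2.isDiag_iff_proj_eq,
          Finset.mem_image]
        constructor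
        · rintro ⟨⟨hx, hy⟩, rfl⟩
          exact ⟨x, hx, rfl⟩
        · rintro ⟨z, hz, he⟩
          have : z = x ∧ z = y := by
            constructor
            · have := Sym2.eq_iff.1 he
              tauto
            · have := Sym2.eq_iff.1 he
              tauto
          obtain ⟨rfl, rfl⟩ := this
          exact ⟨⟨hz, hz⟩, rfl⟩
    rw [himg, Finset.card_image_of_injective _ (fun x y h => by
      have := Sym2.eq_iff.1 h; tauto), hA]
  have := Finset.card_filter_add_card_filter_not (s := A.sym2)
    (p := fun e => e.IsDiag)
  omega

lemma exists_no_mono {u : ℕ} (hu : 20 ≤ u) :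
    ∃ c : Sym2 (Fin (2^(u/2))) → Fin 2, ∀ i, ¬ monoClique c i u := by
  classical
  set n := 2^(u/2) with hn
  set N := Fintype.card (Sym2 (Fin n)) with hN
  set q := (u+1).choose 2 - u with hq
  -- each bad set has small cardinality
  have hbadcard : ∀ (A : Finset (Fin n)), A.card = u → ∀ i : Fin 2,
      (Finset.univ.filter (fun c : Sym2 (Fin n) → Fin 2 =>
        ∀ e ∈ (A.sym2).filter (fun e => ¬ e.IsDiag), c e = i)).card = 2^(N - q) := by
    intro A hA i
    set EA := (A.sym2).filter (fun e => ¬ e.IsDiag) with hEA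
    have hEAcard : EA.card = q := offdiag_card A hA
    have hequiv : {c : Sym2 (Fin n) → Fin 2 // ∀ e ∈ EA, c e = i} ≃
        ({e : Sym2 (Fin n) // e ∉ EA} → Fin 2) := by
      refine ⟨fun c => fun e => c.1 e.1, fun g => ⟨fun e => if h : e ∈ EA then i else g ⟨e, h⟩,
        fun e he => by simp [he]⟩, ?_, ?_⟩
      · rintro ⟨c, hc⟩
        ext e
        by_cases h : e ∈ EA
        · simp [h, hc e h]
        · simp [h]
      · intro g
        funext e
        simp [e.2]
    have hcard1 : (Finset.univ.filter (fun c : Sym2 (Fin n) → Fin 2 =>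
        ∀ e ∈ EA, c e = i)).card = Fintype.card {c : Sym2 (Fin n) → Fin 2 // ∀ e ∈ EA, c e = i} :=
      (Fintype.card_subtype _).symm
    rw [hcard1, Fintype.card_congr hequiv, Fintype.card_fun, Fintype.card_fin]
    congr 1
    have : Fintype.card {e : Sym2 (Fin n) // e ∈ EA} = EA.card := Fintype.card_coe EA
    have hcompl : Fintype.card {e : Sym2 (Fin n) // e ∉ EA} =
        N - Fintype.card {e : Sym2 (Fin n) // e ∈ EA} := by
      rw [hN]
      exact Fintype.card_subtype_compl _
    rw [hcompl, this, hEAcard]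
  -- the union bound
  set bad : Finset (Sym2 (Fin n) → Fin 2) :=
    Finset.univ.filter (fun c => ∃ i : Fin 2, monoClique c i u) with hbad
  have hsub : bad ⊆ (Finset.univ.powersetCard u).biUnion (fun A =>
      (Finset.univ.filter (fun c : Sym2 (Fin n) → Fin 2 =>
        ∀ e ∈ (A.sym2).filter (fun e => ¬ e.IsDiag), c e = 0)) ∪
      (Finset.univ.filter (fun c : Sym2 (Fin n) → Fin 2 =>
        ∀ e ∈ (A.sym2).filter (fun e => ¬ e.IsDiag), c e = 1))) := by
    intro c hc
    rw [hbad, Finset.mem_filter] at hc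
    obtain ⟨-, i, A, hcard, hmono⟩ := hc
    rw [Finset.mem_biUnion]
    refine ⟨A, by simp [Finset.mem_powersetCard_univ, hcard], ?_⟩
    have hmem : ∀ e ∈ (A.sym2).filter (fun e => ¬ e.IsDiag), c e = i := by
      intro e he
      rw [Finset.mem_filter] at he
      obtain ⟨he1, he2⟩ := he
      induction e with
      | _ x y =>
          rw [Finset.mk_mem_sym2_iff] at he1
          have hxy : x ≠ y := by
            intro h
            exact he2 (by simp [h])
          exact hmono x he1.1 y he1.2 hxy
    rcases fin2cases i with rfl | rfl
    · exact Finset.mem_union_left _ (Finset.mem_filter.2 ⟨Finset.mem_univ _, hmem⟩)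
    · exact Finset.mem_union_right _ (Finset.mem_filter.2 ⟨Finset.mem_univ _, hmem⟩)
  have hbadle : bad.card ≤ (n.choose u) * (2 * 2^(N - q)) := by
    calc bad.card ≤ _ := Finset.card_le_card hsub
      _ ≤ (Finset.univ.powersetCard u : Finset (Finset (Fin n))).sum (fun A =>
          ((Finset.univ.filter (fun c : Sym2 (Fin n) → Fin 2 =>
            ∀ e ∈ (A.sym2).filter (fun e => ¬ e.IsDiag), c e = 0)) ∪
          (Finset.univ.filter (fun c : Sym2 (Fin n) → Fin 2 =>
            ∀ e ∈ (A.sym2).filter (fun e => ¬ e.IsDiag), c e = 1))).card) :=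
        Finset.card_biUnion_le
      _ ≤ (Finset.univ.powersetCard u : Finset (Finset (Fin n))).sum (fun _ => 2 * 2^(N-q)) := by
          refine Finset.sum_le_sum ?_
          intro A hA
          rw [Finset.mem_powersetCard_univ] at hA
          calc _ ≤ _ := Finset.card_union_le _ _
            _ ≤ 2 * 2^(N-q) := by
                rw [hbadcard A hA 0, hbadcard A hA 1]; omega
      _ = (Finset.univ.powersetCard u : Finset (Finset (Fin n))).card * (2 * 2^(N-q)) := by
          rw [Finset.sum_const, smul_eq_mul]
      _ = (n.choose u) * (2 * 2^(N - q)) := by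
          rw [Finset.card_powersetCard, Finset.card_univ, Fintype.card_fin]
  -- numeric bound : n.choose u * 2 < 2 ^ q
  have hnum : (n.choose u) * 2 < 2^q := by
    have h1 : 2^u * n.choose u ≤ n^u := by
      calc 2^u * n.choose u ≤ u.factorial * n.choose u :=
            Nat.mul_le_mul_right _ (two_pow_le_factorial (by omega))
        _ = n.descFactorial u := (Nat.descFactorial_eq_factorial_mul_choose n u).symm
        _ ≤ n^u := Nat.descFactorial_le_pow n u
    have h2 : n^u = 2^((u/2)*u) := by rw [hn, ← pow_mul]
    have h3 : n.choose u ≤ 2^((u/2)*u - u) := by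
      have hle : (u/2)*u ≥ u := by
        have : u/2 ≥ 1 := by omega
        calc u = 1 * u := (one_mul u).symm
          _ ≤ (u/2) * u := Nat.mul_le_mul_right u this
      have := h1
      rw [h2] at this
      have hpow : 2^((u/2)*u) = 2^u * 2^((u/2)*u - u) := by
        rw [← pow_add]
        congr 1
        omega
      rw [hpow] at this
      exact Nat.le_of_mul_le_mul_left this (by positivity)
    have h4 : (u/2)*u - u + 1 < q := by
      rw [hq, Nat.choose_two_right]
      have hch : (u+1) * (u+1-1) = (u+1) * u := by rw [Nat.add_sub_cancel]
      rw [hch]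
      rcases Nat.even_or_odd u with ⟨k, hk⟩ | ⟨k, hk⟩
      · subst hk
        have e1 : (k + k + 1) * (k + k) = 2 * (k * (k + k + 1)) := by ring
        rw [e1, Nat.mul_div_cancel_left _ (by norm_num : (0:ℕ) < 2)]
        have e2 : (k + k) / 2 = k := by omega
        rw [e2]
        have e3 : k * (k + k + 1) = k * (k + k) + k := by ring
        set A := k * (k + k) with hA
        have e4 : 4 * k ≤ A := by
          rw [hA]; nlinarith [hu]
        omega
      · subst hk
        have e1 : (2 * k + 1 + 1) * (2 * k + 1) = 2 * ((k + 1) * (2 * k + 1)) := by ring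
        rw [e1, Nat.mul_div_cancel_left _ (by norm_num : (0:ℕ) < 2)]
        have e2 : (2 * k + 1) / 2 = k := by omega
        rw [e2]
        have e3 : (k + 1) * (2 * k + 1) = k * (2 * k + 1) + (2 * k + 1) := by ring
        set A := k * (2 * k + 1) with hA
        have e4 : 4 * k ≤ A := by
          rw [hA]; nlinarith [hu]
        omega
    calc (n.choose u) * 2 ≤ 2^((u/2)*u - u) * 2 := Nat.mul_le_mul_right _ h3
      _ = 2^((u/2)*u - u + 1) := by rw [pow_succ]
      _ < 2^q := Nat.pow_lt_pow_right (by omega) h4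
  -- q ≤ N
  have haux : ∀ k : ℕ, 3 ≤ k → 2*k+1 ≤ 2^k := by
    intro k hk
    induction k with
    | zero => omega
    | succ j ih =>
        rcases Nat.lt_or_ge j 3 with h | h
        · have hj : j = 2 := by omega
          subst hj; decide
        · have := ih h
          rw [pow_succ]
          omega
  have hun : u ≤ n := by
    have h10 : 10 ≤ u/2 := by omega
    have h1 : 2*(u/2)+1 ≤ 2^(u/2) := haux _ (by omega)
    have : u ≤ 2*(u/2)+1 := by omega
    omega
  have hqN : q ≤ N := by
    obtain ⟨A, -, hA⟩ := Finset.exists_subset_card_eq (by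
      rw [Finset.card_univ, Fintype.card_fin]; exact hun : u ≤ (Finset.univ : Finset (Fin n)).card)
    have hoc := offdiag_card A hA
    rw [hq, ← hoc, hN]
    calc _ ≤ (Finset.univ : Finset (Sym2 (Fin n))).card := Finset.card_le_card (Finset.subset_univ _)
      _ = _ := Finset.card_univ
  -- conclude
  have hstrict : bad.card < Fintype.card (Sym2 (Fin n) → Fin 2) := by
    have hcardfun : Fintype.card (Sym2 (Fin n) → Fin 2) = 2^N := by
      rw [Fintype.card_fun, Fintype.card_fin, hN]
    rw [hcardfun]
    calc bad.card ≤ (n.choose u) * (2 * 2^(N - q)) := hbadle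
      _ = ((n.choose u) * 2) * 2^(N-q) := by ring
      _ < 2^q * 2^(N-q) := by
          exact (Nat.mul_lt_mul_right (by positivity)).2 hnum
      _ = 2^N := by rw [← pow_add]; congr 1; omega
  have hnonfull : ∃ c : Sym2 (Fin n) → Fin 2, c ∉ bad := by
    by_contra hcon
    push_neg at hcon
    have : (Finset.univ : Finset (Sym2 (Fin n) → Fin 2)) ⊆ bad := fun c _ => hcon c
    have := Finset.card_le_card this
    rw [Finset.card_univ] at this
    omega
  obtain ⟨c, hc⟩ := hnonfull
  refine ⟨c, ?_⟩
  intro i hi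
  exact hc (by rw [hbad, Finset.mem_filter]; exact ⟨Finset.mem_univ _, i, hi⟩)

lemma erdos_lower {u : ℕ} (hu : 20 ≤ u) : 2^(u/2) < ramsey2 u u := by
  by_contra hcon
  push_neg at hcon
  have h := rProp_of_le hcon
  obtain ⟨c, hc⟩ := exists_no_mono hu
  obtain ⟨i, hi⟩ := h c
  refine hc i ?_
  rcases fin2cases i with rfl | rfl
  · simpa using hi
  · simpa using hi

/-- the shrunken parameter -/
def sv (t : ℕ) : ℕ := t - (t/20 + 1)

set_option maxRecDepth 10000 in
set_option maxHeartbeats 1600000 in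
lemma io_drop : ∀ T : ℕ, ∃ t, T ≤ t ∧
    2^(t/100) * ramsey2 (sv t) (sv t) ≤ ramsey2 t t := by
  intro T
  by_contra hcon
  push_neg at hcon
  set T' := T + 2000 with hT'
  set M := (Finset.range T').sup (fun v => ramsey2 v v) + 1 with hM
  have claim : ∀ t, ramsey2 t t ≤ 2^(t/4) * M := by
    intro t
    induction t using Nat.strong_induction_on with
    | _ t ih =>
        rcases Nat.lt_or_ge t T' with h | h
        · have : ramsey2 t t ≤ (Finset.range T').sup (fun v => ramsey2 v v) :=
            Finset.le_sup (f := fun v => ramsey2 v v) (Finset.mem_range.2 h)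
          have hone : 1 ≤ 2^(t/4) := Nat.one_le_two_pow
          calc ramsey2 t t ≤ M := by omega
            _ = 1 * M := (one_mul M).symm
            _ ≤ 2^(t/4) * M := Nat.mul_le_mul_right _ hone
        · have hfail := hcon t (by omega)
          have hsvlt : sv t < t := by
            rw [sv]; omega
          have ihsv := ih (sv t) hsvlt
          have hdiv : t/100 + (sv t)/4 ≤ t/4 := by
            rw [sv]
            set a := t/20 with ha
            set b := t/100 with hb
            set c := (t - (a + 1))/4 with hc
            set d := t/4 with hd
            have h1 : b * 100 ≤ t := Nat.div_mul_le_self t 100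
            have h2 : 20 * a + t % 20 = t := Nat.div_add_mod t 20
            have h2' : t % 20 < 20 := Nat.mod_lt _ (by norm_num)
            have h3 : c * 4 ≤ t - (a + 1) := Nat.div_mul_le_self _ 4
            have h4 : 4 * d + t % 4 = t := Nat.div_add_mod t 4
            have h4' : t % 4 < 4 := Nat.mod_lt _ (by norm_num)
            have h5 : 2000 ≤ t := by omega
            omega
          calc ramsey2 t t ≤ 2^(t/100) * ramsey2 (sv t) (sv t) := by omega
            _ ≤ 2^(t/100) * (2^((sv t)/4) * M) := Nat.mul_le_mul_left _ ihsv
            _ = 2^(t/100 + (sv t)/4) * M := by rw [pow_add]; ring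
            _ ≤ 2^(t/4) * M := Nat.mul_le_mul_right _ (Nat.pow_le_pow_right (by norm_num) hdiv)
  -- contradiction for large t
  set t := 20 * (M + T' + 100) with ht
  have h20 : 20 ≤ t := by omega
  have herd := erdos_lower h20
  have hcl := claim t
  have hMlt : M < 2^(t/2 - t/4) := by
    have h1 : M ≤ t/2 - t/4 := by omega
    have h2 : M < 2^M := Nat.lt_two_pow_self (n := M)
    exact lt_of_lt_of_le h2 (Nat.pow_le_pow_right (by norm_num) h1)
  have : 2^(t/2) < 2^(t/4) * 2^(t/2 - t/4) := by
    calc 2^(t/2) < ramsey2 t t := herd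
      _ ≤ 2^(t/4) * M := hcl
      _ < 2^(t/4) * 2^(t/2 - t/4) := (Nat.mul_lt_mul_left (by positivity)).2 hMlt
  rw [← pow_add] at this
  have heq : t/4 + (t/2 - t/4) = t/2 := by omega
  rw [heq] at this
  omega

/-! ### extended binomials and numeric bounds -/

def ch (n : ℕ) (k : ℤ) : ℕ := if 0 ≤ k then n.choose k.toNat else 0

lemma ch_pascal (n : ℕ) (k : ℤ) : ch (n+1) k = ch n k + ch n (k-1) := by
  rcases lt_trichotomy k 0 with h | h | h
  · have h1 : ¬ (0:ℤ) ≤ k := by omega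
    have h2 : ¬ (0:ℤ) ≤ k - 1 := by omega
    simp [ch, h1, h2]
    intro hk; omega
  · subst h
    simp [ch]
  · have h0 : 0 ≤ k := le_of_lt h
    have h1 : 0 ≤ k - 1 := by omega
    have h2 : k.toNat = (k-1).toNat + 1 := by omega
    simp only [ch, if_pos h0, if_pos h1, h2]
    rw [Nat.choose_succ_succ']
    omega

lemma ch_pos {n : ℕ} {k : ℤ} (h0 : 0 ≤ k) (hn : k.toNat ≤ n) : 1 ≤ ch n k := by
  rw [ch, if_pos h0]
  exact Nat.choose_pos hn

lemma ch_eq (n j : ℕ) : ch n (j : ℤ) = n.choose j := by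
  simp [ch]

lemma succ_pow_le_three_mul {m : ℕ} (hm : 1 ≤ m) : (m+1)^m ≤ 3 * m^m := by
  have hR : ((m:ℝ)+1)^m ≤ 3 * (m:ℝ)^m := by
    have hmpos : (0:ℝ) < m := by exact_mod_cast hm
    have h1 : (m:ℝ) + 1 = m * (1 + 1/m) := by field_simp
    rw [h1, mul_pow]
    have h2 : (1 + 1/(m:ℝ))^m ≤ 3 := by
      have h3 : (1 + 1/(m:ℝ)) ≤ Real.exp (1/m) := by
        have := Real.add_one_le_exp (1/(m:ℝ))
        linarith
      calc (1 + 1/(m:ℝ))^m ≤ (Real.exp (1/m))^m := by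
            apply pow_le_pow_left₀ (by positivity) h3
        _ = Real.exp (m * (1/m)) := by rw [← Real.exp_nat_mul]
        _ = Real.exp 1 := by rw [mul_one_div, div_self (ne_of_gt hmpos)]
        _ ≤ 3 := by
            have := Real.exp_one_lt_d9
            linarith
    calc (m:ℝ)^m * (1 + 1/(m:ℝ))^m ≤ (m:ℝ)^m * 3 :=
          mul_le_mul_of_nonneg_left h2 (by positivity)
      _ = 3 * (m:ℝ)^m := by ring
  exact_mod_cast hR

lemma pow_self_le_four_pow_mul_factorial : ∀ m : ℕ, m^m ≤ 4^m * m.factorial := by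
  intro m
  induction m with
  | zero => simp
  | succ n ih =>
      rcases Nat.eq_zero_or_pos n with rfl | hn
      · decide
      · calc (n+1)^(n+1) = (n+1) * (n+1)^n := by rw [pow_succ]; ring
          _ ≤ (n+1) * (3 * n^n) := Nat.mul_le_mul_left _ (succ_pow_le_three_mul hn)
          _ ≤ (n+1) * (3 * (4^n * n.factorial)) := by
              refine Nat.mul_le_mul_left _ (Nat.mul_le_mul_left _ ih)
          _ = 3 * ((n+1) * (4^n * n.factorial)) := by ring
          _ ≤ 4 * ((n+1) * (4^n * n.factorial)) :=
              Nat.mul_le_mul_right _ (by norm_num)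
          _ = 4^(n+1) * (n+1).factorial := by
              rw [Nat.factorial_succ, pow_succ]; ring

lemma choose_le_two_pow_eight {t m : ℕ} (hm : 1 ≤ m) (htm : t ≤ 20 * m) :
    (2*t+m).choose m ≤ 2^(8*m) := by
  have h1 : (2*t+m).choose m * m.factorial ≤ (2*t+m)^m := by
    calc (2*t+m).choose m * m.factorial = m.factorial * (2*t+m).choose m := by ring
      _ = (2*t+m).descFactorial m := (Nat.descFactorial_eq_factorial_mul_choose _ m).symm
      _ ≤ (2*t+m)^m := Nat.descFactorial_le_pow _ m
  have h2 : (2*t+m)^m ≤ (42*m)^m := Nat.pow_le_pow_left (by omega) m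
  have h3 : (42*m)^m = 42^m * m^m := by rw [mul_pow]
  have h4 : 42^m * m^m ≤ 42^m * (4^m * m.factorial) :=
    Nat.mul_le_mul_left _ (pow_self_le_four_pow_mul_factorial m)
  have h5 : 42^m * (4^m * m.factorial) = 168^m * m.factorial := by
    rw [show (168:ℕ) = 42 * 4 by norm_num, mul_pow]; ring
  have h6 : (2*t+m).choose m * m.factorial ≤ 168^m * m.factorial := by omega
  have h7 : (2*t+m).choose m ≤ 168^m :=
    Nat.le_of_mul_le_mul_right (by
      calc (2*t+m).choose m * m.factorial ≤ 168^m * m.factorial := h6) m.factorial_pos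
  calc (2*t+m).choose m ≤ 168^m := h7
    _ ≤ (2^8)^m := Nat.pow_le_pow_left (by norm_num) m
    _ = 2^(8*m) := by rw [← pow_mul, Nat.mul_comm]

/-! ### the cost recursions -/

/-- stopping rule -/
def Fstop (ρ a b : ℕ) : Prop := ramsey2 a b ≤ ρ ∨ a ≤ 2 ∨ b ≤ 2

noncomputable instance : ∀ ρ a b, Decidable (Fstop ρ a b) := fun _ _ _ => by
  unfold Fstop; infer_instance

/-- pool size recursion (first argument is fuel). -/
noncomputable def Qf (ρ : ℕ) : ℕ → ℕ → ℕ → ℕ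
  | 0, a, b => ramsey2 a b
  | (f+1), a, b => if Fstop ρ a b then ramsey2 a b
      else Qf ρ f (a-1) b + Qf ρ f a (b-1)

/-- cost recursion (first argument is fuel). -/
noncomputable def Df (ρ : ℕ) : ℕ → ℕ → ℕ → ℕ
  | 0, a, b => (ramsey2 a b).choose 2
  | (f+1), a, b => if Fstop ρ a b then (ramsey2 a b).choose 2
      else (Qf ρ (f+1) a b - 1) + max (Df ρ f (a-1) b) (Df ρ f a (b-1))

lemma Qf_of_F {ρ a b : ℕ} (h : Fstop ρ a b) : ∀ f, Qf ρ f a b = ramsey2 a b := by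
  intro f
  cases f with
  | zero => rfl
  | succ f => rw [Qf, if_pos h]

lemma ramsey2_pos {a b : ℕ} (ha : 1 ≤ a) (hb : 1 ≤ b) : 1 ≤ ramsey2 a b := by
  by_contra h
  push_neg at h
  have h0 : ramsey2 a b = 0 := by omega
  have := ramsey2_spec a b
  rw [h0] at this
  obtain ⟨i, A, hcard, -⟩ := this (fun _ => 0)
  have : A.card = 0 := by
    have : A ⊆ ∅ := fun x hx => absurd x.2 (by omega)
    simpa using Finset.card_le_card this
  rcases fin2cases i with rfl | rfl <;> simp_all

lemma Qf_pos (ρ : ℕ) : ∀ f a b, 1 ≤ a → 1 ≤ b → 1 ≤ Qf ρ f a b := by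
  intro f
  induction f with
  | zero => intro a b ha hb; exact ramsey2_pos ha hb
  | succ f ih =>
      intro a b ha hb
      rw [Qf]
      split
      · exact ramsey2_pos ha hb
      · rename_i hF
        have ha3 : 3 ≤ a := by
          by_contra h; exact hF (Or.inr (Or.inl (by omega)))
        have hb3 : 3 ≤ b := by
          by_contra h; exact hF (Or.inr (Or.inr (by omega)))
        have := ih (a-1) b (by omega) hb
        omega

lemma Fstop_mono_a {ρ a b : ℕ} (h : Fstop ρ (a+1) b) : Fstop ρ a b := by
  rcases h with h | h | h
  · exact Or.inl (le_trans (ramsey2_mono (by omega) le_rfl) h)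
  · exact Or.inr (Or.inl (by omega))
  · exact Or.inr (Or.inr h)

lemma Fstop_mono_b {ρ a b : ℕ} (h : Fstop ρ a (b+1)) : Fstop ρ a b := by
  rcases h with h | h | h
  · exact Or.inl (le_trans (ramsey2_mono le_rfl (by omega)) h)
  · exact Or.inr (Or.inl h)
  · exact Or.inr (Or.inr (by omega))

lemma Qf_mono_a (ρ : ℕ) (f a b : ℕ) : Qf ρ f a b ≤ Qf ρ (f+1) (a+1) b := by
  rw [Qf]
  split
  · rename_i hF
    rw [Qf_of_F (Fstop_mono_a hF)]
    exact ramsey2_mono (by omega) le_rfl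
  · simp only [Nat.add_sub_cancel]
    omega

lemma Qf_mono_b (ρ : ℕ) (f a b : ℕ) : Qf ρ f a b ≤ Qf ρ (f+1) a (b+1) := by
  rw [Qf]
  split
  · rename_i hF
    rw [Qf_of_F (Fstop_mono_b hF)]
    exact ramsey2_mono le_rfl (by omega)
  · simp only [Nat.add_sub_cancel]
    omega

/-- the superharmonic weight function -/
noncomputable def phiQ (t m a b : ℕ) : ℕ :=
  ch (m+a+b) ((m:ℤ) + b - t) + ch (m+a+b) ((m:ℤ) + a - t)

lemma phiQ_pascal (t m a b : ℕ) :
    phiQ t m (a+1) (b+1) = phiQ t m a (b+1) + phiQ t m (a+1) b := by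
  unfold phiQ
  have e1 : m+(a+1)+(b+1) = (m+a+(b+1)) + 1 := by omega
  have e2 : m+a+(b+1) = m+(a+1)+b := by omega
  rw [e1]
  rw [ch_pascal (m+a+(b+1)) ((m:ℤ) + ((b+1 : ℕ) : ℤ) - t)]
  rw [ch_pascal (m+a+(b+1)) ((m:ℤ) + ((a+1 : ℕ) : ℤ) - t)]
  have e3 : (m:ℤ) + ((a+1 : ℕ) : ℤ) - t - 1 = (m:ℤ) + (a : ℕ) - t := by push_cast; ring
  have e4 : (m:ℤ) + ((b+1 : ℕ) : ℤ) - t - 1 = (m:ℤ) + (b : ℕ) - t := by push_cast; ring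
  rw [e3, e4, e2]
  omega

lemma Qf_le_phi (ρ t m : ℕ) (hρt : t ≤ ρ)
    (hshape : ∀ a b, 3 ≤ a → 3 ≤ b → a ≤ t → b ≤ t → ¬ Fstop ρ a b →
      t < m + a ∨ t < m + b) :
    ∀ f a b, f = a + b → 1 ≤ a → a ≤ t → 1 ≤ b → b ≤ t →
      (t ≤ m + a ∨ t ≤ m + b) →
      Qf ρ f a b ≤ phiQ t m a b * ρ := by
  intro f
  induction f with
  | zero => intro a b hf ha; omega
  | succ f ih =>
      intro a b hf ha hat hb hbt hmin
      have hphi1 : 1 ≤ phiQ t m a b := by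
        unfold phiQ
        rcases hmin with hm | hm
        · have := ch_pos (n := m+a+b) (k := (m:ℤ) + a - t) (by omega) (by
            have : ((m:ℤ) + a - t).toNat = m + a - t := by omega
            omega)
          omega
        · have := ch_pos (n := m+a+b) (k := (m:ℤ) + b - t) (by omega) (by
            have : ((m:ℤ) + b - t).toNat = m + b - t := by omega
            omega)
          omega
      rw [Qf]
      split
      · rename_i hF
        -- leaf : value is ramsey2 a b ≤ ρ
        have hrle : ramsey2 a b ≤ ρ := by
          rcases hF with h | h | h
          · exact h
          · calc ramsey2 a b ≤ ramsey2 2 t := ramsey2_mono h hbt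
              _ ≤ t := ramsey2_two_left (by omega)
              _ ≤ ρ := hρt
          · calc ramsey2 a b ≤ ramsey2 t 2 := ramsey2_mono hat h
              _ ≤ t := ramsey2_two_right (by omega)
              _ ≤ ρ := hρt
        calc ramsey2 a b ≤ ρ := hrle
          _ = 1 * ρ := (one_mul ρ).symm
          _ ≤ phiQ t m a b * ρ := Nat.mul_le_mul_right _ hphi1
      · rename_i hF
        have ha3 : 3 ≤ a := by
          by_contra h; exact hF (Or.inr (Or.inl (by omega)))
        have hb3 : 3 ≤ b := by
          by_contra h; exact hF (Or.inr (Or.inr (by omega)))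
        have hsh := hshape a b ha3 hb3 hat hbt hF
        have h1 := ih (a-1) b (by omega) (by omega) (by omega) hb hbt (by omega)
        have h2 := ih a (b-1) (by omega) ha hat (by omega) (by omega) (by omega)
        have hpas : phiQ t m a b = phiQ t m (a-1) b + phiQ t m a (b-1) := by
          have e : a = (a-1)+1 ∧ b = (b-1)+1 := by omega
          obtain ⟨ea, eb⟩ := e
          calc phiQ t m a b = phiQ t m ((a-1)+1) ((b-1)+1) := by rw [← ea, ← eb]
            _ = phiQ t m (a-1) ((b-1)+1) + phiQ t m ((a-1)+1) (b-1) := phiQ_pascal _ _ _ _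
            _ = phiQ t m (a-1) b + phiQ t m a (b-1) := by rw [← ea, ← eb]
        rw [hpas, Nat.add_mul]
        omega

lemma Qf_le_top (ρ t : ℕ) : ∀ d a b, a + d ≤ t → b ≤ t →
    Qf ρ (a+b) a b ≤ Qf ρ (t+t) t t := by
  -- first raise the first argument, then the second
  have mono_a : ∀ d a b, Qf ρ (a+b) a b ≤ Qf ρ (a+d+b) (a+d) b := by
    intro d
    induction d with
    | zero => intro a b; simp
    | succ d ih =>
        intro a b
        calc Qf ρ (a+b) a b ≤ Qf ρ (a+d+b) (a+d) b := ih a b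
          _ ≤ Qf ρ (a+d+b+1) (a+d+1) b := Qf_mono_a ρ _ _ _
          _ = Qf ρ (a+(d+1)+b) (a+(d+1)) b := by ring_nf
    
  have mono_b : ∀ d a b, Qf ρ (a+b) a b ≤ Qf ρ (a+(b+d)) a (b+d) := by
    intro d
    induction d with
    | zero => intro a b; simp
    | succ d ih =>
        intro a b
        calc Qf ρ (a+b) a b ≤ Qf ρ (a+(b+d)) a (b+d) := ih a b
          _ ≤ Qf ρ (a+(b+d)+1) a (b+d+1) := Qf_mono_b ρ _ _ _
          _ = Qf ρ (a+(b+(d+1))) a (b+(d+1)) := by ring_nf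
  intro d a b hd hb
  have h1 : Qf ρ (a+b) a b ≤ Qf ρ (t+b) t b := by
    have := mono_a (t-a) a b
    have e : a + (t-a) = t := by omega
    rw [e] at this
    exact this
  have h2 : Qf ρ (t+b) t b ≤ Qf ρ (t+t) t t := by
    have := mono_b (t-b) t b
    have e : b + (t-b) = t := by omega
    rw [e] at this
    exact this
  exact le_trans h1 h2

lemma Df_le (ρ t : ℕ) (hρt : t ≤ ρ) :
    ∀ f a b, f = a + b → 1 ≤ a → a ≤ t → 1 ≤ b → b ≤ t →
      Df ρ f a b ≤ (a+b) * Qf ρ (t+t) t t + ρ.choose 2 := by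
  intro f
  induction f with
  | zero => intro a b hf; omega
  | succ f ih =>
      intro a b hf ha hat hb hbt
      rw [Df]
      split
      · rename_i hF
        have hrle : ramsey2 a b ≤ ρ := by
          rcases hF with h | h | h
          · exact h
          · calc ramsey2 a b ≤ ramsey2 2 t := ramsey2_mono h hbt
              _ ≤ t := ramsey2_two_left (by omega)
              _ ≤ ρ := hρt
          · calc ramsey2 a b ≤ ramsey2 t 2 := ramsey2_mono hat h
              _ ≤ t := ramsey2_two_right (by omega)
              _ ≤ ρ := hρt
        have := Nat.choose_le_choose 2 hrle
        omega
      · rename_i hF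
        have ha3 : 3 ≤ a := by
          by_contra h; exact hF (Or.inr (Or.inl (by omega)))
        have hb3 : 3 ≤ b := by
          by_contra h; exact hF (Or.inr (Or.inr (by omega)))
        have h1 := ih (a-1) b (by omega) (by omega) (by omega) hb hbt
        have h2 := ih a (b-1) (by omega) ha hat (by omega) (by omega)
        have hq : Qf ρ (f+1) a b ≤ Qf ρ (t+t) t t := by
          have e : f + 1 = a + b := hf
          rw [e]
          exact Qf_le_top ρ t (t-a) a b (by omega) hbt
        have e1 : (a-1) + b = a + b - 1 := by omega
        have e2 : a + (b-1) = a + b - 1 := by omega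
        rw [e1] at h1
        rw [e2] at h2
        have hmax : max (Df ρ f (a-1) b) (Df ρ f a (b-1)) ≤
            (a + b - 1) * Qf ρ (t+t) t t + ρ.choose 2 := by omega
        have : (a+b-1) * Qf ρ (t+t) t t + Qf ρ (t+t) t t = (a+b) * Qf ρ (t+t) t t := by
          have e3 : a + b - 1 + 1 = a + b := by omega
          calc (a+b-1) * Qf ρ (t+t) t t + Qf ρ (t+t) t t
              = (a+b-1+1) * Qf ρ (t+t) t t := by ring
            _ = (a+b) * Qf ρ (t+t) t t := by rw [e3]
        omega

/-! ### the builder game tree -/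

inductive BTree where
  | leaf : BTree
  | node : Sym2 ℕ → (Fin 2 → BTree) → BTree

def playOf : BTree → (ℕ → Fin 2) → List (Sym2 ℕ × Fin 2)
  | .leaf, _ => []
  | .node e f, γ => (e, γ 0) :: playOf (f (γ 0)) (fun n => γ (n+1))

def bruteT : List (Sym2 ℕ) → BTree
  | [] => .leaf
  | e :: rest => .node e (fun _ => bruteT rest)

def joinT (v : ℕ) : List ℕ → Finset ℕ → Finset ℕ → (Finset ℕ → Finset ℕ → BTree) → BTree
  | [], R, B, k => k R B
  | w :: rest, R, B, k => .node s(v,w)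
      (fun c => if c = 0 then joinT v rest (insert w R) B k else joinT v rest R (insert w B) k)

def pick (S : Finset ℕ) (n : ℕ) : Finset ℕ := ((S.sort (·≤·)).take n).toFinset

def pairsList : List ℕ → List (Sym2 ℕ)
  | [] => []
  | x :: xs => xs.map (fun w => s(x,w)) ++ pairsList xs

noncomputable def spineT (ρ : ℕ) : ℕ → ℕ → ℕ → Finset ℕ → BTree
  | 0, _, _, _ => .leaf
  | (f+1), a, b, pool =>
      if Fstop ρ a b then bruteT (pairsList ((pick pool (ramsey2 a b)).sort (·≤·)))
      else
        match (pick pool (Qf ρ (f+1) a b)).sort (·≤·) with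
        | [] => .leaf
        | v :: todo =>
            joinT v todo ∅ ∅ (fun R B =>
              if Qf ρ f (a-1) b ≤ R.card then spineT ρ f (a-1) b R
              else spineT ρ f a (b-1) B)

lemma pick_subset (S : Finset ℕ) (n : ℕ) : pick S n ⊆ S := by
  intro x hx
  rw [pick, List.mem_toFinset] at hx
  have := List.mem_of_mem_take hx
  rwa [Finset.mem_sort] at this

lemma pick_card {S : Finset ℕ} {n : ℕ} (h : n ≤ S.card) : (pick S n).card = n := by
  rw [pick, List.toFinset_card_of_nodup ((Finset.sort_nodup _ _).sublist (List.take_sublist _ _)),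
    List.length_take, Finset.length_sort]
  omega

lemma pairs_length : ∀ l : List ℕ, (pairsList l).length = (l.length).choose 2 := by
  intro l
  induction l with
  | nil => simp [pairsList]
  | cons x xs ih =>
      rw [pairsList, List.length_append, List.length_map, ih, List.length_cons,
        Nat.choose_succ_succ, Nat.choose_one_right]

lemma pairs_mem_of : ∀ l : List ℕ, ∀ x y : ℕ, x ∈ l → y ∈ l → x ≠ y →
    s(x,y) ∈ pairsList l := by
  intro l
  induction l with
  | nil => intro x y hx; simp at hx
  | cons z zs ih =>
      intro x y hx hy hxy
      rw [List.mem_cons] at hx hy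
      rw [pairsList, List.mem_append]
      rcases hx with rfl | hx <;> rcases hy with rfl | hy
      · exact absurd rfl hxy
      · exact Or.inl (List.mem_map.2 ⟨y, hy, rfl⟩)
      · refine Or.inl (List.mem_map.2 ⟨x, hx, ?_⟩)
        rw [Sym2.eq_swap]
      · exact Or.inr (ih x y hx hy hxy)

lemma pairs_elem : ∀ l : List ℕ, l.Nodup → ∀ e ∈ pairsList l,
    ∃ u v : ℕ, u ≠ v ∧ u ∈ l ∧ v ∈ l ∧ e = s(u,v) := by
  intro l
  induction l with
  | nil => intro _ e he; simp [pairsList] at he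
  | cons z zs ih =>
      intro hnd e he
      rw [pairsList, List.mem_append] at he
      rcases he with he | he
      · obtain ⟨w, hw, rfl⟩ := List.mem_map.1 he
        refine ⟨z, w, ?_, List.mem_cons_self, List.mem_cons.2 (Or.inr hw), rfl⟩
        intro h
        subst h
        exact (List.nodup_cons.1 hnd).1 hw
      · obtain ⟨u, v, huv, hu, hv, rfl⟩ := ih (List.nodup_cons.1 hnd).2 e he
        exact ⟨u, v, huv, List.mem_cons.2 (Or.inr hu), List.mem_cons.2 (Or.inr hv), rfl⟩

lemma pairs_nodup : ∀ l : List ℕ, l.Nodup → (pairsList l).Nodup := by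
  intro l
  induction l with
  | nil => intro _; simp [pairsList]
  | cons z zs ih =>
      intro hnd
      obtain ⟨hz, hzs⟩ := List.nodup_cons.1 hnd
      rw [pairsList]
      refine List.Nodup.append ?_ (ih hzs) ?_
      · refine List.Nodup.map_on ?_ hzs
        intro x hx y hy hxy
        rcases Sym2.eq_iff.1 hxy with ⟨-, h⟩ | ⟨h1, h2⟩
        · exact h
        · rw [← h1] at hy; exact absurd hy hz
      · intro e he1 he2
        obtain ⟨w, hw, rfl⟩ := List.mem_map.1 he1
        obtain ⟨u, v, huv, hu, hv, hee⟩ := pairs_elem zs hzs _ he2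
        have hzmem : z ∈ s(u,v) := by
          rw [← hee]
          exact Sym2.mem_mk_left _ _
        rcases Sym2.mem_iff.1 hzmem with rfl | rfl
        · exact hz hu
        · exact hz hv

lemma playOf_brute_fst : ∀ (ps : List (Sym2 ℕ)) (γ : ℕ → Fin 2),
    (playOf (bruteT ps) γ).map Prod.fst = ps := by
  intro ps
  induction ps with
  | nil => intro γ; simp [bruteT, playOf]
  | cons e rest ih =>
      intro γ
      rw [bruteT, playOf, List.map_cons, ih]

lemma join_good (v : ℕ) : ∀ (todo : List ℕ) (R B : Finset ℕ)
    (k : Finset ℕ → Finset ℕ → BTree) (γ : ℕ → Fin 2),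
    todo.Nodup → Disjoint R B → (∀ w ∈ todo, w ∉ R ∧ w ∉ B) →
    ∃ R' B' L₀ γ',
      playOf (joinT v todo R B k) γ = L₀ ++ playOf (k R' B') γ' ∧
      R ⊆ R' ∧ B ⊆ B' ∧ R' ∪ B' = R ∪ B ∪ todo.toFinset ∧ Disjoint R' B' ∧
      L₀.map Prod.fst = todo.map (fun w => s(v,w)) ∧
      (∀ w ∈ R', w ∈ R ∨ ((s(v,w), (0:Fin 2)) ∈ L₀)) ∧
      (∀ w ∈ B', w ∈ B ∨ ((s(v,w), (1:Fin 2)) ∈ L₀)) := by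
  intro todo
  induction todo with
  | nil =>
      intro R B k γ _ hd _
      exact ⟨R, B, [], γ, by simp [joinT], subset_rfl, subset_rfl, by simp, hd,
        by simp, fun w hw => Or.inl hw, fun w hw => Or.inl hw⟩
  | cons w rest ih =>
      intro R B k γ hnodup hd hmem
      obtain ⟨hwmem, hrestnd⟩ := List.nodup_cons.1 hnodup
      have hwR : w ∉ R := (hmem w (List.mem_cons_self)).1
      have hwB : w ∉ B := (hmem w (List.mem_cons_self)).2
      rcases fin2cases (γ 0) with h0 | h0
      · -- red edge to w
        obtain ⟨R', B', L₀, γ', heq, hR, hB, hun, hd', hfst, hcR, hcB⟩ :=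
          ih (insert w R) B k (fun n => γ (n+1)) hrestnd
            (by
              rw [Finset.disjoint_left]
              intro x hx hx'
              rcases Finset.mem_insert.1 hx with rfl | hx2
              · exact hwB hx'
              · exact (Finset.disjoint_left.1 hd) hx2 hx')
            (by
              intro u hu
              refine ⟨?_, (hmem u (List.mem_cons.2 (Or.inr hu))).2⟩
              intro hins
              rcases Finset.mem_insert.1 hins with rfl | hu2
              · exact hwmem hu
              · exact (hmem u (List.mem_cons.2 (Or.inr hu))).1 hu2)
        refine ⟨R', B', (s(v,w), γ 0) :: L₀, γ', ?_, ?_, hB, ?_, hd', ?_, ?_, ?_⟩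
        · have hstep : playOf (joinT v (w::rest) R B k) γ
              = (s(v,w), γ 0) :: playOf (joinT v rest (insert w R) B k) (fun n => γ (n+1)) := by
            rw [joinT, playOf, h0]
            simp
          rw [hstep, heq]
          rfl
        · exact fun x hx => hR (Finset.mem_insert_of_mem hx)
        · rw [hun]
          ext x
          simp only [Finset.mem_union, Finset.mem_insert, List.toFinset_cons]
          tauto
        · rw [List.map_cons, hfst, List.map_cons]
        · intro u hu
          rcases hcR u hu with hu2 | hu2
          · rcases Finset.mem_insert.1 hu2 with rfl | hu3
            · refine Or.inr (List.mem_cons.2 (Or.inl ?_))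
              rw [h0]
            · exact Or.inl hu3
          · exact Or.inr (List.mem_cons.2 (Or.inr hu2))
        · intro u hu
          rcases hcB u hu with hu2 | hu2
          · exact Or.inl hu2
          · exact Or.inr (List.mem_cons.2 (Or.inr hu2))
      · -- blue edge to w
        obtain ⟨R', B', L₀, γ', heq, hR, hB, hun, hd', hfst, hcR, hcB⟩ :=
          ih R (insert w B) k (fun n => γ (n+1)) hrestnd
            (by
              rw [Finset.disjoint_left]
              intro x hx hx'
              rcases Finset.mem_insert.1 hx' with rfl | hx2
              · exact hwR hx
              · exact (Finset.disjoint_left.1 hd) hx hx2)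
            (by
              intro u hu
              refine ⟨(hmem u (List.mem_cons.2 (Or.inr hu))).1, ?_⟩
              intro hins
              rcases Finset.mem_insert.1 hins with rfl | hu2
              · exact hwmem hu
              · exact (hmem u (List.mem_cons.2 (Or.inr hu))).2 hu2)
        refine ⟨R', B', (s(v,w), γ 0) :: L₀, γ', ?_, hR, ?_, ?_, hd', ?_, ?_, ?_⟩
        · have hstep : playOf (joinT v (w::rest) R B k) γ
              = (s(v,w), γ 0) :: playOf (joinT v rest R (insert w B) k) (fun n => γ (n+1)) := by
            rw [joinT, playOf, h0]
            simp
          rw [hstep, heq]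
          rfl
        · exact fun x hx => hB (Finset.mem_insert_of_mem hx)
        · rw [hun]
          ext x
          simp only [Finset.mem_union, Finset.mem_insert, List.toFinset_cons]
          tauto
        · rw [List.map_cons, hfst, List.map_cons]
        · intro u hu
          rcases hcR u hu with hu2 | hu2
          · exact Or.inl hu2
          · exact Or.inr (List.mem_cons.2 (Or.inr hu2))
        · intro u hu
          rcases hcB u hu with hu2 | hu2
          · rcases Finset.mem_insert.1 hu2 with rfl | hu3
            · refine Or.inr (List.mem_cons.2 (Or.inl ?_))
              rw [h0]
            · exact Or.inl hu3
          · exact Or.inr (List.mem_cons.2 (Or.inr hu2))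

lemma brute_good (a b : ℕ) (S : Finset ℕ) (hcard : S.card = ramsey2 a b) (γ : ℕ → Fin 2) :
    (playOf (bruteT (pairsList (S.sort (·≤·)))) γ).length = (ramsey2 a b).choose 2 ∧
    (∀ pr ∈ playOf (bruteT (pairsList (S.sort (·≤·)))) γ,
      ∃ u v : ℕ, u ≠ v ∧ u ∈ S ∧ v ∈ S ∧ pr.1 = s(u,v)) ∧
    ((playOf (bruteT (pairsList (S.sort (·≤·)))) γ).map Prod.fst).Nodup ∧
    (∃ (i : Fin 2) (A : Finset ℕ), A ⊆ S ∧ A.card = (if i = 0 then a else b) ∧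
      ∀ u ∈ A, ∀ v ∈ A, u ≠ v →
        (s(u,v), i) ∈ playOf (bruteT (pairsList (S.sort (·≤·)))) γ) := by
  classical
  set l := S.sort (·≤·) with hl
  set L := playOf (bruteT (pairsList l)) γ with hL
  have hfst : L.map Prod.fst = pairsList l := playOf_brute_fst _ _
  have hlnd : l.Nodup := Finset.sort_nodup _ _
  have hllen : l.length = S.card := Finset.length_sort _
  have hmeml : ∀ x, x ∈ l ↔ x ∈ S := fun x => Finset.mem_sort _
  refine ⟨?_, ?_, ?_, ?_⟩
  · have : L.length = (L.map Prod.fst).length := (List.length_map _).symm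
    rw [this, hfst, pairs_length, hllen, hcard]
  · intro pr hpr
    have : pr.1 ∈ L.map Prod.fst := List.mem_map.2 ⟨pr, hpr, rfl⟩
    rw [hfst] at this
    obtain ⟨u, v, huv, hu, hv, he⟩ := pairs_elem l hlnd _ this
    exact ⟨u, v, huv, (hmeml u).1 hu, (hmeml v).1 hv, he⟩
  · rw [hfst]
    exact pairs_nodup l hlnd
  · -- extract the mono clique via the Ramsey property
    set g : Fin (ramsey2 a b) → ℕ := fun j => ((S.orderIsoOfFin hcard) j : ℕ) with hg
    have hginj : Function.Injective g := by
      intro x y hxy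
      exact (S.orderIsoOfFin hcard).injective (Subtype.ext hxy)
    have hgS : ∀ j, g j ∈ S := fun j => ((S.orderIsoOfFin hcard) j).2
    set c : Sym2 (Fin (ramsey2 a b)) → Fin 2 :=
      fun e => ((L.find? (fun pr => pr.1 = Sym2.map g e)).map Prod.snd).getD 0 with hc
    obtain ⟨i, A', hcard', hmono'⟩ := ramsey2_spec a b c
    have hkey : ∀ u' v' : Fin (ramsey2 a b), u' ≠ v' → c s(u',v') = i →
        (s(g u', g v'), i) ∈ L := by
      intro u' v' huv hci
      have hne : g u' ≠ g v' := fun h => huv (hginj h)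
      have hmem1 : s(g u', g v') ∈ pairsList l :=
        pairs_mem_of l _ _ ((hmeml _).2 (hgS u')) ((hmeml _).2 (hgS v')) hne
      have hmem2 : s(g u', g v') ∈ L.map Prod.fst := by rw [hfst]; exact hmem1
      obtain ⟨pr, hprL, hpr1⟩ := List.mem_map.1 hmem2
      have hsome : (L.find? (fun pr => pr.1 = Sym2.map g s(u',v'))).isSome := by
        rw [List.find?_isSome]
        refine ⟨pr, hprL, ?_⟩
        simp only [Sym2.map_pair_eq, decide_eq_true_eq]
        exact hpr1
      obtain ⟨pr₂, hfind⟩ := Option.isSome_iff_exists.1 hsome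
      have hpr₂L : pr₂ ∈ L := List.mem_of_find?_eq_some hfind
      have hpr₂1 : pr₂.1 = s(g u', g v') := by
        have := List.find?_some hfind
        simp only [Sym2.map_pair_eq] at this
        exact of_decide_eq_true this
      have hcval : c s(u',v') = pr₂.2 := by
        rw [hc]
        simp only [Sym2.map_pair_eq] at hfind ⊢
        rw [hfind]
        rfl
      rw [hcval] at hci
      have : pr₂ = (s(g u', g v'), i) := by
        ext
        · rw [hpr₂1]
        · rw [hci]
      rw [← this]
      exact hpr₂L
    refine ⟨i, A'.image g, ?_, ?_, ?_⟩
    · intro x hx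
      obtain ⟨u', -, rfl⟩ := Finset.mem_image.1 hx
      exact hgS u'
    · rw [Finset.card_image_of_injective _ hginj, hcard']
      rcases fin2cases i with rfl | rfl <;> simp
    · intro u hu v hv huv
      obtain ⟨u', hu', rfl⟩ := Finset.mem_image.1 hu
      obtain ⟨v', hv', rfl⟩ := Finset.mem_image.1 hv
      have hne : u' ≠ v' := fun h => huv (by rw [h])
      exact hkey u' v' hne (hmono' u' hu' v' hv' hne)

theorem spine_good (ρ t : ℕ) (hρt : t ≤ ρ) :
    ∀ f a b (pool : Finset ℕ) (γ : ℕ → Fin 2), f = a + b → 1 ≤ a → a ≤ t → 1 ≤ b → b ≤ t →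
      Qf ρ f a b ≤ pool.card →
      (playOf (spineT ρ f a b pool) γ).length ≤ Df ρ f a b ∧
      (∀ pr ∈ playOf (spineT ρ f a b pool) γ,
        ∃ u v : ℕ, u ≠ v ∧ u ∈ pool ∧ v ∈ pool ∧ pr.1 = s(u,v)) ∧
      ((playOf (spineT ρ f a b pool) γ).map Prod.fst).Nodup ∧
      (∃ (i : Fin 2) (A : Finset ℕ), A ⊆ pool ∧ A.card = (if i = 0 then a else b) ∧
        ∀ u ∈ A, ∀ v ∈ A, u ≠ v →
          (s(u,v), i) ∈ playOf (spineT ρ f a b pool) γ) := by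
  intro f
  induction f with
  | zero =>
      intro a b pool γ hf ha hat hb hbt hpool
      exact absurd hf (by omega)
  | succ f ih =>
      intro a b pool γ hf ha hat hb hbt hpool
      by_cases hF : Fstop ρ a b
      · -- leaf : brute force on a set of size ramsey2 a b
        have hQ : Qf ρ (f+1) a b = ramsey2 a b := Qf_of_F hF _
        have hple : ramsey2 a b ≤ pool.card := by rw [← hQ]; exact hpool
        have hScard : (pick pool (ramsey2 a b)).card = ramsey2 a b := pick_card hple
        have hSsub : pick pool (ramsey2 a b) ⊆ pool := pick_subset _ _
        have hred : spineT ρ (f+1) a b pool =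
            bruteT (pairsList ((pick pool (ramsey2 a b)).sort (·≤·))) := by
          rw [spineT, if_pos hF]
        have hDleaf : Df ρ (f+1) a b = (ramsey2 a b).choose 2 := by
          rw [Df, if_pos hF]
        obtain ⟨h1, h2, h3, h4⟩ := brute_good a b (pick pool (ramsey2 a b)) hScard γ
        rw [hred, hDleaf]
        refine ⟨le_of_eq h1, ?_, h3, ?_⟩
        · intro pr hpr
          obtain ⟨u, v, huv, hu, hv, he⟩ := h2 pr hpr
          exact ⟨u, v, huv, hSsub hu, hSsub hv, he⟩
        · obtain ⟨i, A, hAs, hAc, hAm⟩ := h4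
          exact ⟨i, A, fun x hx => hSsub (hAs hx), hAc, hAm⟩
      · -- internal node
        have ha3 : 3 ≤ a := by
          by_contra h; exact hF (Or.inr (Or.inl (by omega)))
        have hb3 : 3 ≤ b := by
          by_contra h; exact hF (Or.inr (Or.inr (by omega)))
        have hQeq : Qf ρ (f+1) a b = Qf ρ f (a-1) b + Qf ρ f a (b-1) := by
          rw [Qf, if_neg hF]
        have hDeq : Df ρ (f+1) a b =
            (Qf ρ (f+1) a b - 1) + max (Df ρ f (a-1) b) (Df ρ f a (b-1)) := by
          rw [Df, if_neg hF]
        have hpcard : (pick pool (Qf ρ (f+1) a b)).card = Qf ρ (f+1) a b := pick_card hpool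
        have hpsub : pick pool (Qf ρ (f+1) a b) ⊆ pool := pick_subset _ _
        have hQ1pos : 1 ≤ Qf ρ f (a-1) b := Qf_pos ρ f (a-1) b (by omega) hb
        have hQ2pos : 1 ≤ Qf ρ f a (b-1) := Qf_pos ρ f a (b-1) ha (by omega)
        cases hsrt : (pick pool (Qf ρ (f+1) a b)).sort (·≤·) with
        | nil =>
            exfalso
            have := Finset.length_sort (α := ℕ) (· ≤ ·)
              (s := pick pool (Qf ρ (f+1) a b))
            rw [hsrt] at this
            simp at this
            omega
        | cons v todo =>
            have hsortnd : (v :: todo).Nodup := by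
              rw [← hsrt]; exact Finset.sort_nodup _ _
            obtain ⟨hvtodo, htodond⟩ := List.nodup_cons.1 hsortnd
            have hmemsort : ∀ x : ℕ, x ∈ v :: todo ↔ x ∈ pick pool (Qf ρ (f+1) a b) := by
              intro x
              rw [← hsrt]
              exact Finset.mem_sort _
            have hvmem : v ∈ pick pool (Qf ρ (f+1) a b) :=
              (hmemsort v).1 (List.mem_cons_self)
            have htodomem : ∀ w ∈ todo, w ∈ pick pool (Qf ρ (f+1) a b) :=
              fun w hw => (hmemsort w).1 (List.mem_cons.2 (Or.inr hw))
            have hlensort : todo.length + 1 = Qf ρ (f+1) a b := by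
              have := Finset.length_sort (α := ℕ) (· ≤ ·)
                (s := pick pool (Qf ρ (f+1) a b))
              rw [hsrt] at this
              simp at this
              omega
            have hred : spineT ρ (f+1) a b pool = joinT v todo ∅ ∅ (fun R B =>
                if Qf ρ f (a-1) b ≤ R.card then spineT ρ f (a-1) b R
                else spineT ρ f a (b-1) B) := by
              rw [spineT, if_neg hF, hsrt]
            rw [hred]
            obtain ⟨R', B', L₀, γ', heq, -, -, hun, hd', hfst, hcR, hcB⟩ :=
              join_good v todo ∅ ∅ (fun R B =>
                if Qf ρ f (a-1) b ≤ R.card then spineT ρ f (a-1) b R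
                else spineT ρ f a (b-1) B) γ htodond (Finset.disjoint_empty_left _)
                (fun w _ => ⟨Finset.notMem_empty w, Finset.notMem_empty w⟩)
            have hun' : R' ∪ B' = todo.toFinset := by
              rw [hun]; simp
            have htodocard : todo.toFinset.card = todo.length :=
              List.toFinset_card_of_nodup htodond
            have hcards : R'.card + B'.card = todo.length := by
              rw [← htodocard, ← hun']
              exact (Finset.card_union_of_disjoint hd').symm
            have hRsub : R' ⊆ todo.toFinset := hun' ▸ Finset.subset_union_left
            have hBsub : B' ⊆ todo.toFinset := hun' ▸ Finset.subset_union_right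
            have htodosetsub : ∀ x ∈ todo.toFinset, x ∈ pool := by
              intro x hx
              exact hpsub (htodomem x (List.mem_toFinset.1 hx))
            have hvnotset : v ∉ todo.toFinset := fun h => hvtodo (List.mem_toFinset.1 h)
            have hvpool : v ∈ pool := hpsub hvmem
            have hL₀len : L₀.length = todo.length := by
              have : (L₀.map Prod.fst).length = (todo.map (fun w => s(v,w))).length := by
                rw [hfst]
              simpa using this
            have hL₀mem : ∀ pr ∈ L₀, ∃ w ∈ todo, pr.1 = s(v,w) := by
              intro pr hpr
              have : pr.1 ∈ L₀.map Prod.fst := List.mem_map.2 ⟨pr, hpr, rfl⟩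
              rw [hfst] at this
              obtain ⟨w, hw, he⟩ := List.mem_map.1 this
              exact ⟨w, hw, he.symm⟩
            have hndL₀ : (L₀.map Prod.fst).Nodup := by
              rw [hfst]
              refine List.Nodup.map_on ?_ htodond
              intro x hx y hy hxy
              rcases Sym2.eq_iff.1 hxy with ⟨-, h⟩ | ⟨h1, h2⟩
              · exact h
              · rw [← h1] at hy; exact absurd hy hvtodo
            -- the two cases of the continuation
            by_cases hc : Qf ρ f (a-1) b ≤ R'.card
            · rw [if_pos hc] at heq
              obtain ⟨s1, s2, s3, s4⟩ := ih (a-1) b R' γ' (by omega) (by omega) (by omega)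
                hb hbt hc
              rw [heq]
              have hsubpool : ∀ x ∈ R', x ∈ pool := by
                intro x hx
                exact htodosetsub x (hRsub hx)
              have hvnotR : v ∉ R' := fun h => hvnotset (hRsub h)
              constructor
              · -- length
                rw [List.length_append, hL₀len, hDeq]
                have : todo.length = Qf ρ (f+1) a b - 1 := by omega
                rw [this]
                have := le_max_left (Df ρ f (a-1) b) (Df ρ f a (b-1))
                omega
              constructor
              · -- edge supports
                intro pr hpr
                rcases List.mem_append.1 hpr with hpr | hpr
                · obtain ⟨w, hw, he⟩ := hL₀mem pr hpr
                  exact ⟨v, w, fun h => hvtodo (h ▸ hw), hvpool,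
                    htodosetsub w (List.mem_toFinset.2 hw), he⟩
                · obtain ⟨u, u', huu, hu, hu', he⟩ := s2 pr hpr
                  exact ⟨u, u', huu, hsubpool u hu, hsubpool u' hu', he⟩
              constructor
              · -- nodup
                rw [List.map_append]
                refine List.Nodup.append hndL₀ s3 ?_
                intro e he₁ he₂
                obtain ⟨pr, hpr, hpre⟩ := List.mem_map.1 he₁
                obtain ⟨pr', hpr', hpre'⟩ := List.mem_map.1 he₂
                obtain ⟨w, hw, hew⟩ := hL₀mem pr hpr
                obtain ⟨u, u', huu, hu, hu', heu⟩ := s2 pr' hpr'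
                have : v ∈ e := by
                  rw [← hpre, hew]
                  exact Sym2.mem_mk_left _ _
                rw [← hpre', heu] at this
                rcases Sym2.mem_iff.1 this with rfl | rfl
                · exact hvnotR hu
                · exact hvnotR hu'
              · -- mono clique
                obtain ⟨i', A', hA'sub, hA'card, hA'mono⟩ := s4
                rcases fin2cases i' with rfl | rfl
                · refine ⟨0, insert v A', ?_, ?_, ?_⟩
                  · intro x hx
                    rcases Finset.mem_insert.1 hx with rfl | hx2
                    · exact hvpool
                    · exact hsubpool x (hA'sub hx2)
                  · rw [Finset.card_insert_of_notMem (fun h => hvnotR (hA'sub h))]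
                    simp at hA'card ⊢
                    omega
                  · intro x hx y hy hxy
                    rcases Finset.mem_insert.1 hx with rfl | hx2 <;>
                      rcases Finset.mem_insert.1 hy with rfl | hy2
                    · exact absurd rfl hxy
                    · rcases hcR y (hA'sub hy2) with h | h
                      · exact absurd h (Finset.notMem_empty y)
                      · exact List.mem_append.2 (Or.inl h)
                    · rw [Sym2.eq_swap]
                      rcases hcR x (hA'sub hx2) with h | h
                      · exact absurd h (Finset.notMem_empty x)
                      · exact List.mem_append.2 (Or.inl h)
                    · exact List.mem_append.2 (Or.inr (hA'mono x hx2 y hy2 hxy))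
                · refine ⟨1, A', fun x hx => hsubpool x (hA'sub hx), ?_, ?_⟩
                  · simpa using hA'card
                  · intro x hx y hy hxy
                    exact List.mem_append.2 (Or.inr (hA'mono x hx y hy hxy))
            · -- blue case
              have hBc : Qf ρ f a (b-1) ≤ B'.card := by omega
              rw [if_neg hc] at heq
              obtain ⟨s1, s2, s3, s4⟩ := ih a (b-1) B' γ' (by omega) ha hat (by omega)
                (by omega) hBc
              rw [heq]
              have hsubpool : ∀ x ∈ B', x ∈ pool := by
                intro x hx
                exact htodosetsub x (hBsub hx)
              have hvnotB : v ∉ B' := fun h => hvnotset (hBsub h)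
              constructor
              · rw [List.length_append, hL₀len, hDeq]
                have : todo.length = Qf ρ (f+1) a b - 1 := by omega
                rw [this]
                have := le_max_right (Df ρ f (a-1) b) (Df ρ f a (b-1))
                omega
              constructor
              · intro pr hpr
                rcases List.mem_append.1 hpr with hpr | hpr
                · obtain ⟨w, hw, he⟩ := hL₀mem pr hpr
                  exact ⟨v, w, fun h => hvtodo (h ▸ hw), hvpool,
                    htodosetsub w (List.mem_toFinset.2 hw), he⟩
                · obtain ⟨u, u', huu, hu, hu', he⟩ := s2 pr hpr
                  exact ⟨u, u', huu, hsubpool u hu, hsubpool u' hu', he⟩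
              constructor
              · rw [List.map_append]
                refine List.Nodup.append hndL₀ s3 ?_
                intro e he₁ he₂
                obtain ⟨pr, hpr, hpre⟩ := List.mem_map.1 he₁
                obtain ⟨pr', hpr', hpre'⟩ := List.mem_map.1 he₂
                obtain ⟨w, hw, hew⟩ := hL₀mem pr hpr
                obtain ⟨u, u', huu, hu, hu', heu⟩ := s2 pr' hpr'
                have : v ∈ e := by
                  rw [← hpre, hew]
                  exact Sym2.mem_mk_left _ _
                rw [← hpre', heu] at this
                rcases Sym2.mem_iff.1 this with rfl | rfl
                · exact hvnotB hu
                · exact hvnotB hu'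
              · obtain ⟨i', A', hA'sub, hA'card, hA'mono⟩ := s4
                rcases fin2cases i' with rfl | rfl
                · refine ⟨0, A', fun x hx => hsubpool x (hA'sub hx), ?_, ?_⟩
                  · simpa using hA'card
                  · intro x hx y hy hxy
                    exact List.mem_append.2 (Or.inr (hA'mono x hx y hy hxy))
                · refine ⟨1, insert v A', ?_, ?_, ?_⟩
                  · intro x hx
                    rcases Finset.mem_insert.1 hx with rfl | hx2
                    · exact hvpool
                    · exact hsubpool x (hA'sub hx2)
                  · rw [Finset.card_insert_of_notMem (fun h => hvnotB (hA'sub h))]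
                    simp at hA'card ⊢
                    omega
                  · intro x hx y hy hxy
                    rcases Finset.mem_insert.1 hx with rfl | hx2 <;>
                      rcases Finset.mem_insert.1 hy with rfl | hy2
                    · exact absurd rfl hxy
                    · rcases hcB y (hA'sub hy2) with h | h
                      · exact absurd h (Finset.notMem_empty y)
                      · exact List.mem_append.2 (Or.inl h)
                    · rw [Sym2.eq_swap]
                      rcases hcB x (hA'sub hx2) with h | h
                      · exact absurd h (Finset.notMem_empty x)
                      · exact List.mem_append.2 (Or.inl h)
                    · exact List.mem_append.2 (Or.inr (hA'mono x hx2 y hy2 hxy))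

/-! ### from trees to builder strategies -/

def nav : BTree → List (Fin 2) → Option (Sym2 ℕ)
  | .leaf, _ => none
  | .node e _, [] => some e
  | .node _ f, c :: σ => nav (f c) σ

lemma nav_play : ∀ (T : BTree) (γ : ℕ → Fin 2) (i : ℕ) (h : i < (playOf T γ).length),
    nav T (((playOf T γ).take i).map Prod.snd) = some ((playOf T γ)[i]'h).1 ∧
    ((playOf T γ)[i]'h).2 = γ i := by
  intro T
  induction T with
  | leaf => intro γ i h; simp [playOf] at h
  | node e f ihf =>
      intro γ i h
      cases i with
      | zero =>
          constructor
          · simp [playOf, nav]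
          · simp [playOf]
      | succ j =>
          have hexp : playOf (BTree.node e f) γ =
              (e, γ 0) :: playOf (f (γ 0)) (fun n => γ (n+1)) := rfl
          have hlen : j < (playOf (f (γ 0)) (fun n => γ (n+1))).length := by
            rw [hexp, List.length_cons] at h
            omega
          obtain ⟨ih1, ih2⟩ := ihf (γ 0) (fun n => γ (n+1)) j hlen
          constructor
          · simp only [hexp, List.take_succ_cons, List.map_cons, List.getElem_cons_succ]
            exact ih1
          · simp only [hexp, List.getElem_cons_succ]
            exact ih2

def maxOf (e : Sym2 ℕ) : ℕ :=
  Sym2.lift ⟨fun a b => max a b, fun a b => by simp [Nat.max_comm]⟩ e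

lemma maxOf_mem {e : Sym2 ℕ} {x : ℕ} (hx : x ∈ e) : x ≤ maxOf e := by
  induction e with
  | _ a b =>
      rcases Sym2.mem_iff.1 hx with rfl | rfl
      · exact le_max_left _ _
      · exact le_max_right _ _

def histBound (h : History 2) : ℕ := (h.map (fun pr => maxOf pr.1)).foldr max 0

lemma foldr_max_le : ∀ (l : List ℕ) (x : ℕ), x ∈ l → x ≤ l.foldr max 0 := by
  intro l
  induction l with
  | nil => intro x hx; simp at hx
  | cons y ys ih =>
      intro x hx
      rcases List.mem_cons.1 hx with rfl | hx
      · exact le_max_left _ _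
      · exact le_trans (ih x hx) (le_max_right _ _)

def freshE (h : History 2) : Sym2 ℕ := s(histBound h + 1, histBound h + 2)

lemma freshE_good (h : History 2) : ¬ (freshE h).IsDiag ∧ freshE h ∉ h.map Prod.fst := by
  constructor
  · rw [freshE, Sym2.mk_isDiag_iff]
    omega
  · intro hmem
    obtain ⟨pr, hpr, hpre⟩ := List.mem_map.1 hmem
    have h1 : histBound h + 1 ∈ pr.1 := by
      rw [hpre, freshE]
      exact Sym2.mem_mk_left _ _
    have h2 : maxOf pr.1 ≤ histBound h := by
      apply foldr_max_le
      exact List.mem_map.2 ⟨pr, hpr, rfl⟩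
    have := maxOf_mem h1
    omega

def builderOf (T : BTree) : History 2 → Sym2 ℕ := fun h =>
  match nav T (h.map Prod.snd) with
  | some e => if e.IsDiag ∨ e ∈ h.map Prod.fst then freshE h else e
  | none => freshE h

lemma builder_valid (T : BTree) : validBuilder (builderOf T) := by
  intro h
  rw [builderOf]
  cases hnav : nav T (h.map Prod.snd) with
  | none => exact ⟨(freshE_good h).1, (freshE_good h).2⟩
  | some e =>
      change ¬(if e.IsDiag ∨ e ∈ h.map Prod.fst then freshE h else e).IsDiag ∧
        (if e.IsDiag ∨ e ∈ h.map Prod.fst then freshE h else e) ∉ h.map Prod.fst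
      by_cases hcond : e.IsDiag ∨ e ∈ h.map Prod.fst
      · rw [if_pos hcond]
        exact ⟨(freshE_good h).1, (freshE_good h).2⟩
      · rw [if_neg hcond]
        push_neg at hcond
        exact hcond

lemma builderOf_eq_of_nav {T : BTree} {h : History 2} {e : Sym2 ℕ}
    (hnav : nav T (h.map Prod.snd) = some e) (h1 : ¬ e.IsDiag)
    (h2 : e ∉ h.map Prod.fst) : builderOf T h = e := by
  rw [builderOf, hnav]
  change (if e.IsDiag ∨ e ∈ h.map Prod.fst then freshE h else e) = e
  rw [if_neg (by push_neg; exact ⟨h1, h2⟩)]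

lemma onlineRamsey_le_of_tree (t N : ℕ) (T : BTree)
    (hT : ∀ γ : ℕ → Fin 2,
      (playOf T γ).length ≤ N ∧
      (∀ pr ∈ playOf T γ, ∃ u v : ℕ, u ≠ v ∧ pr.1 = s(u,v)) ∧
      ((playOf T γ).map Prod.fst).Nodup ∧
      (∃ (i : Fin 2) (A : Finset ℕ), A.card = t ∧
        ∀ u ∈ A, ∀ v ∈ A, u ≠ v → (s(u,v), i) ∈ playOf T γ)) :
    onlineRamsey 2 (⊤ : SimpleGraph (Fin t)) ≤ N := by
  apply Nat.sInf_le
  refine ⟨builderOf T, builder_valid T, ?_⟩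
  intro P
  set B := builderOf T with hB
  set γ : ℕ → Fin 2 := fun i => P (play B P i) (B (play B P i)) with hγ
  obtain ⟨hlen, hsupp, hnd, hwin⟩ := hT γ
  -- the actual play follows the tree
  have hplay : ∀ n, n ≤ (playOf T γ).length → play B P n = (playOf T γ).take n := by
    intro n
    induction n with
    | zero => intro _; simp [play]
    | succ n ihn =>
        intro hn
        have hn' : n < (playOf T γ).length := by omega
        have ihn' := ihn (by omega)
        have hnavn := (nav_play T γ n hn').1
        have hsndn := (nav_play T γ n hn').2
        have hdiag : ¬ ((playOf T γ)[n]'hn').1.IsDiag := by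
          obtain ⟨u, v, huv, he⟩ := hsupp _ (List.getElem_mem hn')
          rw [he, Sym2.mk_isDiag_iff]
          exact huv
        have hnotmem : ((playOf T γ)[n]'hn').1 ∉
            ((playOf T γ).take n).map Prod.fst := by
          intro hmem
          rw [List.map_take] at hmem
          obtain ⟨j, hj, hje⟩ := List.mem_iff_getElem.1 hmem
          have hjn : j < n := by
            have hj2 : j < n ⊓ ((playOf T γ).map Prod.fst).length := by
              rw [← List.length_take]
              exact hj
            exact lt_of_lt_of_le hj2 (min_le_left _ _)
          have hjlen : j < ((playOf T γ).map Prod.fst).length := by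
            rw [List.length_map]
            omega
          have hgetj : ((playOf T γ).map Prod.fst)[j]'hjlen =
              ((playOf T γ).map Prod.fst)[n]'(by rw [List.length_map]; exact hn') := by
            rw [← List.getElem_take (h := hj)] at *
            rw [hje, List.getElem_map]
          have := (List.Nodup.getElem_inj_iff hnd).1 hgetj
          omega
        have hnavn' : nav T ((play B P n).map Prod.snd) =
            some ((playOf T γ)[n]'hn').1 := by
          rw [ihn']
          exact hnavn
        have hnotmem' : ((playOf T γ)[n]'hn').1 ∉ (play B P n).map Prod.fst := by
          rw [ihn']
          exact hnotmem
        have hBmove : B (play B P n) = ((playOf T γ)[n]'hn').1 := by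
          rw [hB]
          exact builderOf_eq_of_nav hnavn' hdiag hnotmem'
        have hpair : (B (play B P n), P (play B P n) (B (play B P n)))
            = ((playOf T γ)[n]'hn') := by
          have hsnd2 : P (play B P n) (B (play B P n)) = γ n := rfl
          rw [Prod.ext_iff]
          refine ⟨hBmove, ?_⟩
          rw [hsnd2, ← hsndn]
        have hstep : play B P (n+1) = play B P n ++
            [(B (play B P n), P (play B P n) (B (play B P n)))] := rfl
        have htake : (playOf T γ).take (n+1) =
            (playOf T γ).take n ++ [(playOf T γ)[n]'hn'] := by
          rw [List.take_succ]
          congr 1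
          rw [List.getElem?_eq_getElem hn']
          rfl
        rw [hstep, hpair, ihn', htake]
  -- conclude with the winning clique
  obtain ⟨i, A, hAcard, hAmono⟩ := hwin
  refine ⟨(playOf T γ).length, hlen, i, ?_⟩
  have hfull : play B P ((playOf T γ).length) = playOf T γ := by
    rw [hplay _ le_rfl, List.take_length]
  rw [hfull]
  refine ⟨fun j => ((A.orderIsoOfFin hAcard) j : ℕ), ?_, ?_⟩
  · intro x y hxy
    exact (A.orderIsoOfFin hAcard).injective (Subtype.ext hxy)
  · intro u v huv
    rw [SimpleGraph.top_adj] at huv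
    have hne : ((A.orderIsoOfFin hAcard) u : ℕ) ≠ ((A.orderIsoOfFin hAcard) v : ℕ) := by
      intro hcontra
      exact huv ((A.orderIsoOfFin hAcard).injective (Subtype.ext hcontra))
    rw [colourGraph, SimpleGraph.fromEdgeSet_adj]
    refine ⟨?_, hne⟩
    exact hAmono _ ((A.orderIsoOfFin hAcard) u).2 _ ((A.orderIsoOfFin hAcard) v).2 hne

/-! ### putting everything together -/

lemma main_bound (t : ℕ) (h3 : 3 ≤ t) (hρt : t ≤ ramsey2 (sv t) (sv t)) :
    onlineRamsey 2 (⊤ : SimpleGraph (Fin t)) ≤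
      Df (ramsey2 (sv t) (sv t)) (t+t) t t := by
  set ρ := ramsey2 (sv t) (sv t) with hρ
  apply onlineRamsey_le_of_tree t _ (spineT ρ (t+t) t t (Finset.range (Qf ρ (t+t) t t)))
  intro γ
  obtain ⟨h1, h2, h3', h4⟩ := spine_good ρ t hρt (t+t) t t
    (Finset.range (Qf ρ (t+t) t t)) γ rfl (by omega) le_rfl (by omega) le_rfl
    (by rw [Finset.card_range])
  refine ⟨h1, ?_, h3', ?_⟩
  · intro pr hpr
    obtain ⟨u, v, huv, -, -, he⟩ := h2 pr hpr
    exact ⟨u, v, huv, he⟩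
  · obtain ⟨i, A, hsub, hcard, hmono⟩ := h4
    refine ⟨i, A, ?_, hmono⟩
    rcases fin2cases i with rfl | rfl <;> simpa using hcard

lemma Qtop_le (t : ℕ) (h3 : 3 ≤ t) (hρt : t ≤ ramsey2 (sv t) (sv t)) :
    Qf (ramsey2 (sv t) (sv t)) (t+t) t t ≤
      2 * ((2*t + (t/20+1)).choose (t/20+1)) * ramsey2 (sv t) (sv t) := by
  set m := t/20 + 1 with hm
  set ρ := ramsey2 (sv t) (sv t) with hρ
  have hshape : ∀ a b, 3 ≤ a → 3 ≤ b → a ≤ t → b ≤ t → ¬ Fstop ρ a b →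
      t < m + a ∨ t < m + b := by
    intro a b _ _ hat hbt hF
    by_contra hcon
    push_neg at hcon
    obtain ⟨hca, hcb⟩ := hcon
    apply hF
    left
    have hsa : a ≤ sv t := by rw [sv]; omega
    have hsb : b ≤ sv t := by rw [sv]; omega
    exact ramsey2_mono hsa hsb
  have hq := Qf_le_phi ρ t m hρt hshape (t+t) t t rfl (by omega) le_rfl (by omega) le_rfl
    (Or.inl (by omega))
  have hphi : phiQ t m t t = 2 * ((2*t + m).choose m) := by
    rw [phiQ]
    have e0 : (m:ℤ) + t - t = ((m:ℕ) : ℤ) := by ring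
    rw [e0, ch_eq]
    have e1 : m + t + t = 2*t + m := by omega
    rw [e1]
    omega
  rw [hphi] at hq
  exact hq

lemma le_two_pow_400 {n : ℕ} (hn : 5600 ≤ n) : n ≤ 2^(n/400) := by
  have haux : ∀ k : ℕ, 13 ≤ k → 400*(k+1) ≤ 2^k := by
    intro k hk
    induction k with
    | zero => omega
    | succ j ih =>
        rcases Nat.lt_or_ge j 13 with h | h
        · have : j = 12 := by omega
          subst this; norm_num
        · have := ih h
          rw [pow_succ]
          omega
  have h1 : 13 ≤ n/400 := by omega
  have h2 := haux (n/400) h1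
  have h3 : n ≤ 400*(n/400+1) := by omega
  omega

lemma final_numeric {t : ℕ} (ht : 1000000 ≤ t)
    (hdrop : 2^(t/100) * ramsey2 (sv t) (sv t) ≤ ramsey2 t t) :
    2^(t/500 + 1) * Df (ramsey2 (sv t) (sv t)) (t+t) t t ≤ (ramsey2 t t).choose 2 := by
  set m := t/20 + 1 with hm
  set ρ := ramsey2 (sv t) (sv t) with hρ
  set R := ramsey2 t t with hR
  set W := (2*t + m).choose m with hW
  -- div facts for omega
  have d2 : 2*(t/2) + t%2 = t ∧ t%2 < 2 := ⟨Nat.div_add_mod t 2, Nat.mod_lt _ (by norm_num)⟩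
  have d20 : 20*(t/20) + t%20 = t ∧ t%20 < 20 := ⟨Nat.div_add_mod t 20, Nat.mod_lt _ (by norm_num)⟩
  have d100 : 100*(t/100) + t%100 = t ∧ t%100 < 100 := ⟨Nat.div_add_mod t 100, Nat.mod_lt _ (by norm_num)⟩
  have d400 : 400*(t/400) + t%400 = t ∧ t%400 < 400 := ⟨Nat.div_add_mod t 400, Nat.mod_lt _ (by norm_num)⟩
  have d500 : 500*(t/500) + t%500 = t ∧ t%500 < 500 := ⟨Nat.div_add_mod t 500, Nat.mod_lt _ (by norm_num)⟩
  -- sv t / 2 facts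
  have hsv : sv t = t - m := by rw [sv]
  have dsv2 : 2*((sv t)/2) + (sv t)%2 = sv t ∧ (sv t)%2 < 2 :=
    ⟨Nat.div_add_mod _ 2, Nat.mod_lt _ (by norm_num)⟩
  -- Erdős bounds
  have herdt : 2^(t/2) < R := erdos_lower (by omega)
  have herds : 2^((sv t)/2) < ρ := erdos_lower (by omega)
  -- t ≤ ρ
  have htpow : t ≤ 2^(t/400) := le_two_pow_400 (by omega)
  have htsv : t/400 ≤ (sv t)/2 := by omega
  have hρt : t ≤ ρ := by
    calc t ≤ 2^(t/400) := htpow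
      _ ≤ 2^((sv t)/2) := Nat.pow_le_pow_right (by norm_num) htsv
      _ ≤ ρ := by omega
  have hρpos : 1 ≤ ρ := by omega
  have hRpos : 2 ≤ R := by
    have : 1 ≤ 2^(t/2) := Nat.one_le_two_pow
    omega
  -- the structural bound
  have hQtop := Qtop_le t (by omega) hρt
  have hDf := Df_le ρ t hρt (t+t) t t rfl (by omega) le_rfl (by omega) le_rfl
  have hchle : ρ.choose 2 ≤ ρ * ρ := by
    calc ρ.choose 2 ≤ ρ^2 := Nat.choose_le_pow ρ 2
      _ = ρ * ρ := sq ρ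
  have hDf2 : Df ρ (t+t) t t ≤ 4*t*W*ρ + ρ*ρ := by
    have h1 : (t+t) * Qf ρ (t+t) t t ≤ (t+t) * (2 * W * ρ) :=
      Nat.mul_le_mul_left _ hQtop
    have h2 : (t+t) * (2 * W * ρ) = 4*t*W*ρ := by ring
    omega
  -- the numeric bound on W
  have hWle : W ≤ 2^(8*m) := choose_le_two_pow_eight (by omega) (by omega)
  -- goal reformulated
  rw [Nat.choose_two_right]
  rw [Nat.le_div_iff_mul_le (by norm_num : 0 < 2)]
  -- two parts
  set e := t/500 + 1 with he
  have hA1 : 2^e * (4*t*W*ρ) * 4 ≤ R * (R-1) := by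
    have hE0 : 2^e * (4*t*W*ρ) * 4 ≤ 2^(e + 4 + t/400 + 8*m) * ρ := by
      have s1 : t * W ≤ 2^(t/400) * 2^(8*m) := Nat.mul_le_mul htpow hWle
      calc 2^e * (4*t*W*ρ) * 4 = 16 * 2^e * (t*W) * ρ := by ring
        _ ≤ 16 * 2^e * (2^(t/400) * 2^(8*m)) * ρ := by
            refine Nat.mul_le_mul_right _ (Nat.mul_le_mul_left _ s1)
        _ = 2^4 * 2^e * (2^(t/400) * 2^(8*m)) * ρ := by norm_num
        _ = 2^(e + 4 + t/400 + 8*m) * ρ := by rw [← pow_add, ← pow_add, ← pow_add]; ring_nf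
    have hsplit : e + 4 + t/400 + 8*m = (e + 4 + t/400 + 8*m - t/100) + t/100 := by omega
    have hE1 : 2^(e + 4 + t/400 + 8*m) * ρ ≤ 2^(e + 4 + t/400 + 8*m - t/100) * R := by
      calc 2^(e + 4 + t/400 + 8*m) * ρ
          = 2^(e + 4 + t/400 + 8*m - t/100) * (2^(t/100) * ρ) := by
            rw [← Nat.mul_assoc, ← pow_add, ← hsplit]
        _ ≤ 2^(e + 4 + t/400 + 8*m - t/100) * R := Nat.mul_le_mul_left _ hdrop
    have hE2 : 2^(e + 4 + t/400 + 8*m - t/100) ≤ R - 1 := by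
      have hexp : e + 4 + t/400 + 8*m - t/100 ≤ t/2 := by omega
      have := Nat.pow_le_pow_right (by norm_num : 1 ≤ 2) hexp
      omega
    calc 2^e * (4*t*W*ρ) * 4 ≤ 2^(e + 4 + t/400 + 8*m) * ρ := hE0
      _ ≤ 2^(e + 4 + t/400 + 8*m - t/100) * R := hE1
      _ ≤ (R-1) * R := Nat.mul_le_mul_right _ hE2
      _ = R * (R-1) := by ring
  have hA2 : 2^e * (ρ*ρ) * 4 ≤ R * (R-1) := by
    have h1 : (2^(t/100) * ρ) * (2^(t/100) * ρ) ≤ R * R := Nat.mul_le_mul hdrop hdrop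
    have h2 : 2^e * (ρ*ρ) * 8 ≤ (2^(t/100) * ρ) * (2^(t/100) * ρ) := by
      have hexp : e + 3 ≤ t/100 + t/100 := by omega
      calc 2^e * (ρ*ρ) * 8 = 2^(e+3) * (ρ*ρ) := by rw [pow_add]; ring
        _ ≤ 2^(t/100 + t/100) * (ρ*ρ) :=
            Nat.mul_le_mul_right _ (Nat.pow_le_pow_right (by norm_num) hexp)
        _ = (2^(t/100) * ρ) * (2^(t/100) * ρ) := by rw [pow_add]; ring
    -- R*(R-1)*2 ≥ R*R  since R ≥ 2
    have h3 : R * R ≤ R * (R-1) * 2 := by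
      have : R ≤ (R-1) * 2 := by omega
      calc R * R ≤ R * ((R-1) * 2) := Nat.mul_le_mul_left _ this
        _ = R * (R-1) * 2 := by ring
    omega
  calc 2^e * Df ρ (t+t) t t * 2 ≤ 2^e * (4*t*W*ρ + ρ*ρ) * 2 := by
        refine Nat.mul_le_mul_right _ (Nat.mul_le_mul_left _ hDf2)
    _ = (2^e * (4*t*W*ρ) * 4 + 2^e * (ρ*ρ) * 4) / 2 := by ring_nf; omega
    _ ≤ R * (R-1) := by omega

lemma real_pow_bound (t : ℕ) : (1.001:ℝ)^t ≤ 2^(t/500 + 1) := by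
  have key : ∀ (n : ℕ) (x : ℝ), 0 ≤ x → (1+x)^n * (1 - n*x) ≤ 1 := by
    intro n
    induction n with
    | zero => intro x _; simp
    | succ n ih =>
        intro x hx
        have h1 : (1+x)^(n+1) * (1 - (n+1:ℕ)*x) = (1+x)^n * ((1+x)*(1-((n:ℝ)+1)*x)) := by
          push_cast; ring
        have h2 : (1+x)*(1-((n:ℝ)+1)*x) ≤ 1 - (n:ℝ)*x := by nlinarith [sq_nonneg x, hx]
        have h3 : (0:ℝ) ≤ (1+x)^n := by positivity
        calc (1+x)^(n+1) * (1 - (n+1:ℕ)*x) = (1+x)^n * ((1+x)*(1-((n:ℝ)+1)*x)) := h1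
          _ ≤ (1+x)^n * (1 - (n:ℝ)*x) := mul_le_mul_of_nonneg_left h2 h3
          _ ≤ 1 := ih x hx
  have h500 : (1.001:ℝ)^500 ≤ 2 := by
    have hk := key 500 0.001 (by norm_num)
    have h1 : ((500:ℕ):ℝ) * (0.001:ℝ) = 1/2 := by norm_num
    rw [h1] at hk
    have h2 : ((1:ℝ) + 0.001) = 1.001 := by norm_num
    rw [h2] at hk
    have h3 : (1.001:ℝ)^500 * (1 - 1/2) ≤ 1 := hk
    generalize (1.001:ℝ)^500 = y at h3 ⊢
    linarith
  have hsplit : t = 500*(t/500) + t%500 := (Nat.div_add_mod t 500).symm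
  have hmod : t % 500 ≤ 500 := le_of_lt (Nat.mod_lt _ (by norm_num))
  calc (1.001:ℝ)^t = (1.001:ℝ)^(500*(t/500)) * (1.001:ℝ)^(t%500) := by
        rw [← pow_add, ← hsplit]
    _ = ((1.001:ℝ)^500)^(t/500) * (1.001:ℝ)^(t%500) := by rw [pow_mul]
    _ ≤ (2:ℝ)^(t/500) * (1.001:ℝ)^500 := by
        refine mul_le_mul ?_ ?_ (by positivity) (by positivity)
        · exact pow_le_pow_left₀ (by positivity) h500 _
        · exact pow_le_pow_right₀ (by norm_num) hmod
    _ ≤ (2:ℝ)^(t/500) * 2 := mul_le_mul_of_nonneg_left h500 (by positivity)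
    _ = 2^(t/500+1) := by rw [pow_succ]

/-- For infinitely many `t`, the on-line Ramsey number of `K_t` is at most
`1.001^{-t} * C(r(t), 2)`. -/
theorem online_ramsey_infinitely_often_small :
    ∀ t₀ : ℕ, ∃ t : ℕ, t₀ ≤ t ∧ 0 < t ∧
      (onlineRamsey 2 (⊤ : SimpleGraph (Fin t)) : ℝ) ≤
        ((1.001 : ℝ) ^ t)⁻¹ * ((ramsey2 t t).choose 2) := by
  intro t₀
  obtain ⟨t, ht, hdrop⟩ := io_drop (max t₀ 1000000)
  have ht0 : t₀ ≤ t := le_trans (le_max_left _ _) ht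
  have htM : 1000000 ≤ t := le_trans (le_max_right _ _) ht
  refine ⟨t, ht0, by omega, ?_⟩
  have hsv20 : 20 ≤ sv t := by rw [sv]; omega
  have hρt : t ≤ ramsey2 (sv t) (sv t) := by
    have herds : 2^((sv t)/2) < ramsey2 (sv t) (sv t) := erdos_lower hsv20
    have htpow : t ≤ 2^(t/400) := le_two_pow_400 (by omega)
    have hdivs : t/400 ≤ (sv t)/2 := by rw [sv]; omega
    calc t ≤ 2^(t/400) := htpow
      _ ≤ 2^((sv t)/2) := Nat.pow_le_pow_right (by norm_num) hdivs
      _ ≤ ramsey2 (sv t) (sv t) := by omega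
  have hOR := main_bound t (by omega) hρt
  have hN := final_numeric htM hdrop
  set N := Df (ramsey2 (sv t) (sv t)) (t+t) t t with hNdef
  set C := (ramsey2 t t).choose 2 with hC
  have step1 : ((onlineRamsey 2 (⊤ : SimpleGraph (Fin t)) : ℕ) : ℝ) ≤ (N:ℝ) :=
    Nat.cast_le.2 hOR
  have step2 : (1.001:ℝ)^t * N ≤ C := by
    calc (1.001:ℝ)^t * N ≤ (2:ℝ)^(t/500+1) * N :=
          mul_le_mul_of_nonneg_right (real_pow_bound t) (Nat.cast_nonneg _)
      _ = ((2^(t/500+1) * N : ℕ) : ℝ) := by push_cast; ring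
      _ ≤ (C:ℝ) := Nat.cast_le.2 hN
  have hpos : (0:ℝ) < (1.001:ℝ)^t := by positivity
  calc ((onlineRamsey 2 (⊤ : SimpleGraph (Fin t)) : ℕ) : ℝ) ≤ (N:ℝ) := step1
    _ = ((1.001:ℝ)^t)⁻¹ * ((1.001:ℝ)^t * N) := by
        field_simp
    _ ≤ ((1.001:ℝ)^t)⁻¹ * C := mul_le_mul_of_nonneg_left step2 (by positivity)
end

section
/- Let 0 < ε ≤ 1 be real, let r ≥ 1 and s ≥ 1 be integers, and let G be a bipartite graph with parts A and B, where |A| = m and |B| = n, having at least ε·m·n edges. If m ≥ 2ε^{-1}r² and n ≥ 2ε^{-r}s, then G contains a complete bipartite subgraph with r vertices in A and s vertices in B (i.e. there exist sets A' ⊆ A with |A'| = r and B' ⊆ B with |B'| = s such that every vertex of A' is adjacent to every vertex of B'). -/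
open Finset

/-- The function `x ↦ max (x - c) 0 ^ r` is convex on `ℝ`. -/
lemma kst_convex (r : ℕ) (c : ℝ) :
    ConvexOn ℝ Set.univ (fun x : ℝ => max (x - c) 0 ^ r) := by
  have himg : (fun x : ℝ => max (x - c) 0) '' Set.univ = Set.Ici 0 := by
    ext y
    constructor
    · rintro ⟨x, -, rfl⟩; exact le_max_right (x - c) 0
    · intro hy; exact ⟨y + c, Set.mem_univ _, by simp [max_eq_left (Set.mem_Ici.mp hy)]⟩
  have hg : ConvexOn ℝ Set.univ (fun x : ℝ => max (x - c) 0) := by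
    have h1 : ConvexOn ℝ Set.univ (fun x : ℝ => x - c) :=
      (convexOn_id convex_univ).sub (concaveOn_const c convex_univ)
    exact h1.sup (convexOn_const 0 convex_univ)
  have hpow : ConvexOn ℝ ((fun x : ℝ => max (x - c) 0) '' Set.univ) (fun x : ℝ => x ^ r) := by
    rw [himg]; exact convexOn_pow r
  have hmono : MonotoneOn (fun x : ℝ => x ^ r) ((fun x : ℝ => max (x - c) 0) '' Set.univ) := by
    rw [himg]
    intro a ha b _ hab
    exact pow_le_pow_left₀ ha hab r
  exact hpow.comp hg hmono

set_option maxHeartbeats 1000000 in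
/-- Let `G` be a bipartite graph with parts of sizes `m` and `n` (edge set `E`) having at
least `ε m n` edges. If `m ≥ 2 ε⁻¹ r²` and `n ≥ 2 ε^{-r} s`, then `G` contains a complete
bipartite subgraph with `r` vertices in the first part and `s` in the second. -/
theorem kovari_sos_turan (ε : ℝ) (hε0 : 0 < ε) (hε1 : ε ≤ 1) (r s m n : ℕ)
    (hr : 1 ≤ r) (hs : 1 ≤ s) (E : Finset (Fin m × Fin n))
    (hdens : ε * m * n ≤ E.card)
    (hm : 2 * ε⁻¹ * r ^ 2 ≤ (m : ℝ))
    (hn : 2 * (ε ^ r)⁻¹ * s ≤ (n : ℝ)) :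
    ∃ A' : Finset (Fin m), ∃ B' : Finset (Fin n),
      A'.card = r ∧ B'.card = s ∧ ∀ a ∈ A', ∀ b ∈ B', (a, b) ∈ E := by
  classical
  have hεr : (0:ℝ) < ε ^ r := pow_pos hε0 r
  have hεr1 : ε ^ r ≤ 1 := pow_le_one₀ hε0.le hε1
  have hε'1 : (1:ℝ) ≤ ε⁻¹ := (one_le_inv₀ hε0).mpr hε1
  have hεr'1 : (1:ℝ) ≤ (ε ^ r)⁻¹ := (one_le_inv₀ hεr).mpr hεr1
  have hrR : (1:ℝ) ≤ r := by exact_mod_cast hr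
  have hsR : (1:ℝ) ≤ s := by exact_mod_cast hs
  have hn2 : (2:ℝ) ≤ n := le_trans (by nlinarith) hn
  have hnpos : (0:ℝ) < n := by linarith
  have hm2 : 2 * (r:ℝ) ^ 2 ≤ m := le_trans (by nlinarith) hm
  have hmpos : (0:ℝ) < m := by nlinarith
  have hrm : r ≤ m := by
    have : (r:ℝ) ≤ m := by nlinarith
    exact_mod_cast this
  have hεm : 2 * (r:ℝ)^2 ≤ ε * m := by
    have h1 := mul_le_mul_of_nonneg_left hm hε0.le
    have h2 : ε * (2 * ε⁻¹ * (r:ℝ)^2) = 2 * (r:ℝ)^2 := by field_simp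
    rw [h2] at h1; linarith
  -- neighborhoods
  set N : Fin n → Finset (Fin m) := fun b => univ.filter (fun a => (a, b) ∈ E) with hNdef
  have hdeg : ∑ b, (N b).card = E.card := by
    rw [Finset.card_eq_sum_card_fiberwise (f := Prod.snd) (t := univ) (fun p _ => mem_univ _)]
    refine Finset.sum_congr rfl fun b _ => ?_
    refine Finset.card_nbij (fun a => (a, b)) ?_ ?_ ?_
    · intro a ha
      simp only [hNdef, mem_filter, mem_univ, true_and] at ha ⊢
      simpa using ha
    · intro x _ y _ hxy; simpa using congrArg Prod.fst hxy
    · rintro ⟨a, b'⟩ hp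
      simp only [Finset.coe_filter, Set.mem_setOf_eq] at hp
      obtain ⟨hE, hb⟩ := hp
      subst hb
      exact ⟨a, by simp [hNdef, hE], rfl⟩
  set c : ℝ := (r : ℝ) - 1 with hc
  set h : ℝ → ℝ := fun x => max (x - c) 0 ^ r with hh
  -- pointwise : h d ≤ r! * choose d r
  have hpoint : ∀ d : ℕ, h d ≤ (r.factorial : ℝ) * d.choose r := by
    intro d
    have h1 : max ((d:ℝ) - c) 0 ≤ ((d + 1 - r : ℕ) : ℝ) := by
      rcases le_or_gt r (d + 1) with hle | hlt
      · have heq : ((d + 1 - r : ℕ) : ℝ) = (d:ℝ) + 1 - r := by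
          push_cast [hle]; ring
        have hrd : (r:ℝ) ≤ (d:ℝ) + 1 := by exact_mod_cast hle
        rw [heq]
        exact max_le (by simp only [hc]; linarith) (by linarith)
      · have h0 : d + 1 - r = 0 := Nat.sub_eq_zero_of_le hlt.le
        have hd1 : (d:ℝ) + 1 ≤ r := by exact_mod_cast Nat.le_of_lt hlt
        rw [h0]
        exact max_le (by simp only [hc]; push_cast; linarith) (by simp)
    have h2 : h (d:ℝ) ≤ (((d + 1 - r) ^ r : ℕ) : ℝ) := by
      simp only [hh]
      push_cast
      exact pow_le_pow_left₀ (le_max_right _ _) h1 r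
    refine h2.trans ?_
    calc (((d + 1 - r) ^ r : ℕ) : ℝ) ≤ (d.descFactorial r : ℝ) := by
          exact_mod_cast Nat.pow_sub_le_descFactorial d r
      _ = (r.factorial : ℝ) * d.choose r := by
          exact_mod_cast congrArg (Nat.cast (R := ℝ)) (Nat.descFactorial_eq_factorial_mul_choose d r)
  -- Jensen
  have hdegR : (∑ b, ((N b).card : ℝ)) = (E.card : ℝ) := by exact_mod_cast hdeg
  have hjensen : (n:ℝ) * h ((E.card : ℝ) / n) ≤ ∑ b, h ((N b).card) := by
    have hw : ∑ _i : Fin n, (n:ℝ)⁻¹ = 1 := by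
      rw [Finset.sum_const, Finset.card_univ, Fintype.card_fin, nsmul_eq_mul]
      field_simp
    have hJ := (kst_convex r c).map_sum_le (t := univ) (w := fun _ : Fin n => (n:ℝ)⁻¹)
      (p := fun b => ((N b).card : ℝ)) (fun i _ => by positivity) hw (fun i _ => Set.mem_univ _)
    simp only [smul_eq_mul, ← Finset.mul_sum, hdegR] at hJ
    have heq : (n:ℝ)⁻¹ * (E.card : ℝ) = (E.card : ℝ) / n := by ring
    rw [heq] at hJ
    have := mul_le_mul_of_nonneg_left hJ hnpos.le
    calc (n:ℝ) * h ((E.card : ℝ) / n) ≤ (n:ℝ) * ((n:ℝ)⁻¹ * ∑ b, h ((N b).card)) := this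
      _ = ∑ b, h ((N b).card) := by field_simp
  have havg : ε * m ≤ (E.card:ℝ)/n := (le_div_iff₀ hnpos).mpr hdens
  have hmono : h (ε*m) ≤ h ((E.card:ℝ)/n) := by
    simp only [hh]
    exact pow_le_pow_left₀ (le_max_right _ _) (max_le_max (by linarith) le_rfl) r
  have hcM : (0:ℝ) ≤ ε * m - c := by simp only [hc]; nlinarith
  have hr0 : (r:ℝ) ≠ 0 := by linarith
  -- half bound
  have hhalf : (ε*m)^r / 2 ≤ (ε*m - c)^r := by
    have hfac : (0:ℝ) ≤ 1 - 1/(2*r) := by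
      rw [sub_nonneg, div_le_one (by linarith)]; linarith
    have h2r : ε*m * (1 - 1/(2*r)) ≤ ε*m - c := by
      have hd : (r:ℝ) - 1 ≤ ε*m/(2*r) := by
        rw [le_div_iff₀ (by linarith)]
        nlinarith
      have : ε*m*(1 - 1/(2*r)) = ε*m - ε*m/(2*r) := by field_simp
      rw [this]
      simp only [hc]
      linarith
    have hb : (1:ℝ)/2 ≤ (1 - 1/(2*r))^r := by
      have h' := one_add_mul_le_pow (a := -(1/(2*(r:ℝ)))) (by nlinarith) r
      have he1 : (1:ℝ) + r * (-(1/(2*r))) = 1/2 := by field_simp; ring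
      have he2 : (1:ℝ) + (-(1/(2*r))) = 1 - 1/(2*r) := by ring
      rw [he1, he2] at h'
      exact h'
    have hεm0 : (0:ℝ) ≤ ε * m := by positivity
    calc (ε*m)^r/2 = (ε*m)^r * (1/2) := by ring
      _ ≤ (ε*m)^r * (1 - 1/(2*r))^r := by
          exact mul_le_mul_of_nonneg_left hb (by positivity)
      _ = (ε*m * (1 - 1/(2*r)))^r := (mul_pow _ _ _).symm
      _ ≤ (ε*m - c)^r := pow_le_pow_left₀ (by positivity) h2r r
  -- main counting inequality
  have hfact : (0:ℝ) < r.factorial := by exact_mod_cast r.factorial_pos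
  have h2s : 2*(s:ℝ) ≤ (n:ℝ) * ε^r := by
    have h1 := mul_le_mul_of_nonneg_left hn hεr.le
    have h2 : ε^r * (2 * (ε^r)⁻¹ * s) = 2 * s := by field_simp
    nlinarith [h2 ▸ h1]
  have hmain : s * m.choose r ≤ ∑ b, ((N b).card).choose r := by
    have hmr' : (0:ℝ) ≤ (m:ℝ)^r := by positivity
    have chain : (s:ℝ) * ((r.factorial:ℝ) * (m.choose r)) ≤
        ∑ b, ((r.factorial:ℝ) * (((N b).card).choose r)) := by
      calc (s:ℝ) * ((r.factorial:ℝ) * (m.choose r))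
          = (s:ℝ) * (m.descFactorial r : ℝ) := by
            rw [show ((m.descFactorial r : ℕ) : ℝ) = (r.factorial:ℝ) * (m.choose r) by
              exact_mod_cast congrArg (Nat.cast (R := ℝ))
                (Nat.descFactorial_eq_factorial_mul_choose m r)]
        _ ≤ (s:ℝ) * (m:ℝ)^r := by
            have : (m.descFactorial r : ℝ) ≤ (m:ℝ)^r := by
              exact_mod_cast Nat.descFactorial_le_pow m r
            exact mul_le_mul_of_nonneg_left this (by linarith)
        _ ≤ (n:ℝ) * ((ε*m)^r / 2) := by
            have := mul_le_mul_of_nonneg_right h2s hmr'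
            rw [mul_pow]
            nlinarith
        _ ≤ (n:ℝ) * (ε*m - c)^r := mul_le_mul_of_nonneg_left hhalf hnpos.le
        _ = (n:ℝ) * h (ε*m) := by simp only [hh]; rw [max_eq_left hcM]
        _ ≤ (n:ℝ) * h ((E.card:ℝ)/n) := mul_le_mul_of_nonneg_left hmono hnpos.le
        _ ≤ ∑ b, h ((N b).card) := hjensen
        _ ≤ ∑ b, ((r.factorial:ℝ) * (((N b).card).choose r)) :=
            Finset.sum_le_sum fun b _ => hpoint _
    have hR : (s:ℝ) * (m.choose r) ≤ ∑ b, ((((N b).card).choose r : ℕ) : ℝ) := by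
      rw [← Finset.mul_sum] at chain
      have h' : (r.factorial:ℝ) * ((s:ℝ) * (m.choose r)) ≤
          (r.factorial:ℝ) * ∑ b, ((((N b).card).choose r : ℕ) : ℝ) := by linarith [chain]
      exact le_of_mul_le_mul_left h' hfact
    exact_mod_cast hR
  -- pigeonhole
  set P := Finset.powersetCard r (univ : Finset (Fin m)) with hPdef
  have hcount : ∑ R ∈ P, (univ.filter fun b => R ⊆ N b).card = ∑ b, ((N b).card).choose r := by
    have hfilt : ∀ b : Fin n, (P.filter fun R => R ⊆ N b) = (N b).powersetCard r := by
      intro b; ext R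
      simp only [hPdef, Finset.mem_filter, Finset.mem_powersetCard, Finset.subset_univ, true_and]
      tauto
    calc ∑ R ∈ P, (univ.filter fun b => R ⊆ N b).card
        = ∑ R ∈ P, ∑ b : Fin n, if R ⊆ N b then 1 else 0 :=
          Finset.sum_congr rfl fun R _ => Finset.card_filter _ _
      _ = ∑ b : Fin n, ∑ R ∈ P, if R ⊆ N b then 1 else 0 := Finset.sum_comm
      _ = ∑ b : Fin n, (P.filter fun R => R ⊆ N b).card :=
          Finset.sum_congr rfl fun b _ => (Finset.card_filter _ _).symm
      _ = ∑ b, ((N b).card).choose r := by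
          refine Finset.sum_congr rfl fun b _ => ?_
          rw [hfilt b, Finset.card_powersetCard]
  have hPcard : P.card = m.choose r := by
    simp [hPdef, Finset.card_powersetCard]
  have hex : ∃ R ∈ P, s ≤ (univ.filter fun b => R ⊆ N b).card := by
    by_contra hcon
    push_neg at hcon
    have hchoosepos : 0 < m.choose r := Nat.choose_pos hrm
    have hlt : ∑ R ∈ P, (univ.filter fun b => R ⊆ N b).card < s * m.choose r := by
      calc ∑ R ∈ P, (univ.filter fun b => R ⊆ N b).card
          ≤ ∑ _R ∈ P, (s-1) := Finset.sum_le_sum fun R hR =>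
            Nat.le_sub_one_of_lt (hcon R hR)
        _ = P.card * (s-1) := by rw [Finset.sum_const, smul_eq_mul]
        _ < s * m.choose r := by
            rw [hPcard]
            calc m.choose r * (s-1) < m.choose r * (s-1) + m.choose r :=
                Nat.lt_add_of_pos_right hchoosepos
              _ = m.choose r * s := by
                  rw [← Nat.mul_succ, Nat.succ_eq_add_one, Nat.sub_add_cancel hs]
              _ = s * m.choose r := Nat.mul_comm _ _
    rw [hcount] at hlt
    omega
  obtain ⟨R, hRP, hRs⟩ := hex
  obtain ⟨B', hB'sub, hB'card⟩ := Finset.exists_subset_card_eq hRs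
  refine ⟨R, B', (Finset.mem_powersetCard.mp (hPdef ▸ hRP)).2, hB'card, ?_⟩
  intro a ha b hb
  have hbmem := hB'sub hb
  simp only [Finset.mem_filter] at hbmem
  have : a ∈ N b := hbmem.2 ha
  simp only [hNdef, Finset.mem_filter] at this
  exact this.2
end

section
/- Let G be a bipartite graph with finite parts A and B, and let r ≥ 1 and s ≥ 1 be integers. If G contains no complete bipartite subgraph with r vertices in A and s vertices in B, then ∑_{v ∈ B} C(d(v), r) ≤ C(|A|, r) · (s - 1), where d(v) denotes the degree of v (its number of neighbours in A) and C(·,·) denotes the binomial coefficient. -/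
/-- If a bipartite graph with parts of sizes `m`, `n` (edge set `E`) contains no complete
bipartite subgraph with `r` vertices in the first part and `s` in the second, then
`∑_{v ∈ B} C(d(v), r) ≤ C(m, r) (s - 1)`. -/
theorem count_pairs_of_no_complete_bipartite (m n r s : ℕ) (hr : 1 ≤ r) (hs : 1 ≤ s)
    (E : Finset (Fin m × Fin n))
    (h : ¬ ∃ A' : Finset (Fin m), ∃ B' : Finset (Fin n),
      A'.card = r ∧ B'.card = s ∧ ∀ a ∈ A', ∀ b ∈ B', (a, b) ∈ E) :
    ∑ b : Fin n, ((Finset.univ.filter (fun a : Fin m => (a, b) ∈ E)).card).choose r ≤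
      m.choose r * (s - 1) := by
  classical
  set N : Fin n → Finset (Fin m) := fun b => Finset.univ.filter (fun a => (a, b) ∈ E) with hN
  set S : Finset (Finset (Fin m)) := Finset.univ.powersetCard r with hS
  have key : ∀ b : Fin n, ((N b).card).choose r
      = (S.filter (fun A' => A' ⊆ N b)).card := by
    intro b
    rw [← Finset.card_powersetCard]
    congr 1
    ext A'
    simp [hS, Finset.mem_powersetCard, and_comm]
  calc ∑ b : Fin n, ((N b).card).choose r
      = ∑ b : Fin n, (S.filter (fun A' => A' ⊆ N b)).card := by
        exact Finset.sum_congr rfl fun b _ => key b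
    _ = ∑ b : Fin n, ∑ A' ∈ S, if A' ⊆ N b then 1 else 0 := by
        refine Finset.sum_congr rfl fun b _ => ?_
        rw [Finset.card_filter]
    _ = ∑ A' ∈ S, ∑ b : Fin n, if A' ⊆ N b then 1 else 0 := Finset.sum_comm
    _ = ∑ A' ∈ S, (Finset.univ.filter (fun b : Fin n => A' ⊆ N b)).card := by
        refine Finset.sum_congr rfl fun A' _ => ?_
        rw [Finset.card_filter]
    _ ≤ ∑ A' ∈ S, (s - 1) := by
        apply Finset.sum_le_sum
        intro A' hA'
        by_contra hlt
        push_neg at hlt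
        have hsle : s ≤ (Finset.univ.filter (fun b : Fin n => A' ⊆ N b)).card := by
          omega
        obtain ⟨B', hB'sub, hB'card⟩ := Finset.exists_subset_card_eq hsle
        apply h
        refine ⟨A', B', ?_, hB'card, ?_⟩
        · exact (Finset.mem_powersetCard.mp hA').2
        · intro a ha b hb
          have := hB'sub hb
          rw [Finset.mem_filter] at this
          have := this.2 ha
          rw [hN] at this
          simpa using this
    _ = m.choose r * (s - 1) := by
        rw [Finset.sum_const, smul_eq_mul, hS, Finset.card_powersetCard]
        simp
end

section
/- There are infinitely many positive integers t such that r(⌈0.99·t⌉) ≤ 1.001^{-t} · r(t); that is, for every t₀ there exists t ≥ t₀ with (r(⌈0.99·t⌉) : ℝ) ≤ 1.001^{-t} · r(t), where r(t) = r(t,t) is the diagonal Ramsey number. -/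
lemma card_fixed {α : Type*} [Fintype α] [DecidableEq α] (E : Finset α) (i : Fin 2) :
    (Finset.univ.filter (fun c : α → Fin 2 => ∀ e ∈ E, c e = i)).card
      = 2 ^ (Fintype.card α - E.card) := by
  classical
  have h1 : Finset.univ.filter (fun c : α → Fin 2 => ∀ e ∈ E, c e = i)
      = Fintype.piFinset (fun a => if a ∈ E then ({i} : Finset (Fin 2)) else Finset.univ) := by
    ext c
    simp only [Finset.mem_filter, Finset.mem_univ, true_and, Fintype.mem_piFinset]
    constructor
    · intro h a; by_cases ha : a ∈ E <;> simp [ha, h a]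
    · intro h a ha; have := h a; simpa [ha] using this
  rw [h1, Fintype.card_piFinset]
  have h2 : ∀ a : α, (if a ∈ E then ({i} : Finset (Fin 2)) else Finset.univ).card
      = if a ∈ E then 1 else 2 := by
    intro a; by_cases ha : a ∈ E <;> simp [ha]
  simp only [h2]
  rw [Finset.prod_ite, Finset.prod_const_one, one_mul, Finset.prod_const]
  congr 1
  have h3 : Finset.univ.filter (fun a : α => ¬ a ∈ E) = Eᶜ := by ext a; simp
  rw [h3, Finset.card_compl]

lemma exists_no_mono_s12 (t n : ℕ) (htn : t ≤ n) (hbig : 2 * n ^ t < 2 ^ t.choose 2) :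
    ∃ c : Sym2 (Fin n) → Fin 2, ∀ i, ¬ monoClique c i t := by
  classical
  set N := Fintype.card (Sym2 (Fin n)) with hN
  have hEN : t.choose 2 ≤ N := by
    have h1 : t.choose 2 ≤ (n + 1).choose 2 := Nat.choose_le_choose 2 (by omega)
    have h2 : N = (n + 1).choose 2 := by
      rw [hN, Sym2.card, Fintype.card_fin, Nat.choose_two_right, Nat.add_sub_cancel,
        Nat.mul_comm]
    omega
  set Bad := Finset.univ.filter
    (fun c : Sym2 (Fin n) → Fin 2 => ∃ i, monoClique c i t) with hBad
  have hsub : Bad ⊆ Finset.univ.biUnion (fun i : Fin 2 =>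
      (Finset.powersetCard t (Finset.univ : Finset (Fin n))).biUnion (fun A =>
        Finset.univ.filter (fun c : Sym2 (Fin n) → Fin 2 =>
          ∀ e ∈ A.offDiag.image Sym2.mk.uncurry, c e = i))) := by
    intro c hc
    simp only [hBad, Finset.mem_filter, Finset.mem_univ, true_and] at hc
    obtain ⟨i, A, hA, hmono⟩ := hc
    refine Finset.mem_biUnion.2 ⟨i, Finset.mem_univ i, Finset.mem_biUnion.2
      ⟨A, Finset.mem_powersetCard_univ.2 hA, Finset.mem_filter.2 ⟨Finset.mem_univ _, ?_⟩⟩⟩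
    intro e he
    simp only [Finset.mem_image, Finset.mem_offDiag] at he
    obtain ⟨⟨a, b⟩, ⟨ha, hb, hab⟩, rfl⟩ := he
    exact hmono a ha b hb hab
  have hcard : Bad.card ≤ 2 * n.choose t * 2 ^ (N - t.choose 2) := by
    calc Bad.card ≤ _ := Finset.card_le_card hsub
    _ ≤ ∑ i : Fin 2, ((Finset.powersetCard t (Finset.univ : Finset (Fin n))).biUnion (fun A =>
          Finset.univ.filter (fun c : Sym2 (Fin n) → Fin 2 =>
            ∀ e ∈ A.offDiag.image Sym2.mk.uncurry, c e = i))).card := Finset.card_biUnion_le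
    _ ≤ ∑ _i : Fin 2, ∑ _A ∈ Finset.powersetCard t (Finset.univ : Finset (Fin n)),
          2 ^ (N - t.choose 2) := by
        refine Finset.sum_le_sum fun i _ => ?_
        refine le_trans Finset.card_biUnion_le (Finset.sum_le_sum fun A hA => ?_)
        have hAc : A.card = t := Finset.mem_powersetCard_univ.1 hA
        rw [card_fixed, Sym2.card_image_offDiag, hAc]
    _ = 2 * n.choose t * 2 ^ (N - t.choose 2) := by
        simp [Finset.sum_const, Finset.card_powersetCard, Finset.card_univ]
        ring
  have hlt : Bad.card < 2 ^ N := by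
    calc Bad.card ≤ 2 * n.choose t * 2 ^ (N - t.choose 2) := hcard
    _ ≤ 2 * n ^ t * 2 ^ (N - t.choose 2) := by
        have := Nat.choose_le_pow n t
        exact Nat.mul_le_mul_right _ (by omega)
    _ < 2 ^ t.choose 2 * 2 ^ (N - t.choose 2) := by
        exact (Nat.mul_lt_mul_right (by positivity : (0:ℕ) < 2 ^ (N - t.choose 2))).2 hbig
    _ = 2 ^ N := by rw [← pow_add]; congr 1; omega
  have hex : ∃ c : Sym2 (Fin n) → Fin 2, c ∉ Bad := by
    by_contra h
    push_neg at h
    have hsub2 : (Finset.univ : Finset (Sym2 (Fin n) → Fin 2)) ⊆ Bad := fun c _ => h c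
    have := Finset.card_le_card hsub2
    rw [Finset.card_univ, Fintype.card_fun, Fintype.card_fin, ← hN] at this
    omega
  obtain ⟨c, hc⟩ := hex
  refine ⟨c, fun i hi => hc ?_⟩
  simp only [hBad, Finset.mem_filter, Finset.mem_univ, true_and]
  exact ⟨i, hi⟩

lemma ramseySet_mono {q n m : ℕ} (k : Fin q → ℕ) (hnm : n ≤ m)
    (h : ∀ c : Sym2 (Fin n) → Fin q, ∃ i, monoClique c i (k i)) :
    ∀ c : Sym2 (Fin m) → Fin q, ∃ i, monoClique c i (k i) := by
  intro c
  set e : Fin n ↪ Fin m := Fin.castLEEmb hnm with he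
  obtain ⟨i, A, hA, hmono⟩ := h (fun x => c (x.map e))
  refine ⟨i, A.map e, by rw [Finset.card_map, hA], ?_⟩
  intro u hu v hv huv
  obtain ⟨a, ha, rfl⟩ := Finset.mem_map.1 hu
  obtain ⟨b, hb, rfl⟩ := Finset.mem_map.1 hv
  have hab : a ≠ b := fun hab => huv (by rw [hab])
  have := hmono a ha b hb hab
  simpa [Sym2.map_pair_eq] using this
lemma lt_ramseyQ {q n : ℕ} {k : Fin q → ℕ} (hpos : 0 < ramseyQ k)
    (hn : ∃ c : Sym2 (Fin n) → Fin q, ∀ i, ¬ monoClique c i (k i)) : n < ramseyQ k := by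
  by_contra h
  push_neg at h
  have hne : {n : ℕ | ∀ c : Sym2 (Fin n) → Fin q, ∃ i : Fin q, monoClique c i (k i)}.Nonempty :=
    Nat.nonempty_of_pos_sInf hpos
  have hmem := Nat.sInf_mem hne
  have hmem2 := ramseySet_mono k h hmem
  obtain ⟨c, hc⟩ := hn
  obtain ⟨i, hi⟩ := hmem2 c
  exact hc i hi

lemma two_pow_lt_ramsey2 {t : ℕ} (ht : 200 ≤ t) (hpos : 0 < ramsey2 t t) :
    2 ^ ((t - 3) / 2) < ramsey2 t t := by
  have hk : ∀ i : Fin 2, (![t, t] : Fin 2 → ℕ) i = t := fun i => by fin_cases i <;> rfl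
  set m := (t - 3) / 2 with hm
  set n := 2 ^ m with hn
  have h2k : ∀ kk, 4 ≤ kk → 2 * kk + 4 ≤ 2 ^ kk := by
    intro kk hkk
    induction kk, hkk using Nat.le_induction with
    | base => norm_num
    | succ k hk ih =>
        rw [pow_succ]
        omega
  have hm4 : 4 ≤ m ∧ t ≤ 2 * m + 4 := by omega
  have htn : t ≤ n := le_trans hm4.2 (h2k m hm4.1)
  have hbig : 2 * n ^ t < 2 ^ t.choose 2 := by
    have h2C : 2 * t.choose 2 = t * (t - 1) := by
      rw [Nat.choose_two_right]
      exact Nat.mul_div_cancel' (Nat.even_mul_pred_self t).two_dvd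
    have hmt : 2 * m * t ≤ (t - 3) * t := Nat.mul_le_mul_right _ (by omega)
    have hexp : m * t + 1 < t.choose 2 := by
      obtain ⟨u, rfl⟩ : ∃ u, t = u + 200 := ⟨t - 200, by omega⟩
      have e1 : u + 200 - 3 = u + 197 := by omega
      have e2 : u + 200 - 1 = u + 199 := by omega
      rw [e1] at hmt
      rw [e2] at h2C
      nlinarith [hmt, h2C]
    calc 2 * n ^ t = 2 ^ (m * t + 1) := by
          rw [hn, ← pow_mul, ← pow_succ']
    _ < 2 ^ t.choose 2 := Nat.pow_lt_pow_right (by norm_num) hexp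
  obtain ⟨c, hc⟩ := exists_no_mono_s12 t n htn hbig
  have : n < ramseyQ ![t, t] := by
    refine lt_ramseyQ hpos ⟨c, fun i => ?_⟩
    rw [hk i]
    exact hc i
  exact this

/-- For infinitely many `t`, `r(⌈0.99 t⌉) ≤ 1.001^{-t} r(t)`. -/
theorem diagonal_ramsey_jump_infinitely_often :
    ∀ t₀ : ℕ, ∃ t : ℕ, t₀ ≤ t ∧ 0 < t ∧
      (ramsey2 ⌈(0.99 : ℝ) * t⌉₊ ⌈(0.99 : ℝ) * t⌉₊ : ℝ) ≤
        ((1.001 : ℝ) ^ t)⁻¹ * ramsey2 t t := by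
  intro t₀
  by_contra hcon
  push_neg at hcon
  set t₁ := max t₀ 200 with ht₁def
  have ht₁200 : 200 ≤ t₁ := le_max_right _ _
  set f : ℕ → ℕ := fun t => ramsey2 t t with hf
  have H : ∀ t, t₁ ≤ t → (f t : ℝ) < (1.001 : ℝ) ^ t * f (⌈(0.99 : ℝ) * t⌉₊) := by
    intro t ht
    have h1 := hcon t (le_trans (le_max_left _ _) ht) (by omega)
    rw [inv_mul_lt_iff₀ (by positivity)] at h1
    exact h1
  have hfloor : ∀ t : ℕ, ⌊(0.99 : ℝ) * t⌋₊ = 99 * t / 100 := by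
    intro t
    have h : (0.99 : ℝ) * t = ((99 * t : ℕ) : ℝ) / ((100 : ℕ) : ℝ) := by push_cast; ring
    rw [h, Nat.floor_div_natCast, Nat.floor_natCast]
  have hceil_le : ∀ t : ℕ, ⌈(0.99 : ℝ) * t⌉₊ ≤ 99 * t / 100 + 1 := by
    intro t
    calc ⌈(0.99 : ℝ) * t⌉₊ ≤ ⌊(0.99 : ℝ) * t⌋₊ + 1 := Nat.ceil_le_floor_add_one _
    _ = 99 * t / 100 + 1 := by rw [hfloor]
  have hpos : ∀ T, t₁ ≤ T → 0 < f T := by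
    intro T hT
    set t' := 100 * T / 99 with ht'def
    have hT' : t₁ ≤ t' := le_trans hT (by omega)
    have hd : 99 * t' ≤ 100 * T ∧ 100 * T < 99 * t' + 99 := by omega
    have hceq : ⌈(0.99 : ℝ) * t'⌉₊ = T := by
      rw [Nat.ceil_eq_iff (by omega : T ≠ 0)]
      have hc1 : ((99 : ℕ) * t' : ℝ) ≤ ((100 : ℕ) * T : ℝ) := by exact_mod_cast hd.1
      have hc2 : ((100 : ℕ) * T : ℝ) < (99 : ℕ) * t' + 99 := by exact_mod_cast hd.2
      push_cast at hc1 hc2 ⊢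
      constructor
      · have : (T : ℝ) - 1 < T - 0.99 := by norm_num
        rw [Nat.cast_sub (by omega : 1 ≤ T)]
        push_cast
        linarith
      · linarith
    have h2 := H t' hT'
    rw [hceq] at h2
    by_contra h0
    push_neg at h0
    have hz : f T = 0 := by omega
    rw [hz] at h2
    simp at h2
    exact (Nat.cast_nonneg _).not_gt h2
  set M₀ := (Finset.range t₁).sup f with hM₀def
  set M : ℝ := (M₀ : ℝ) + 1 with hMdef
  have hM1 : (1 : ℝ) ≤ M := by
    have : (0 : ℝ) ≤ (M₀ : ℝ) := Nat.cast_nonneg _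
    linarith
  have hMpos : (0 : ℝ) < M := lt_of_lt_of_le one_pos hM1
  have up : ∀ t, t₁ ≤ t → (f t : ℝ) < (1.001 : ℝ) ^ (200 * t) * M := by
    intro t
    induction t using Nat.strong_induction_on with
    | _ t ih =>
      intro ht
      set s := ⌈(0.99 : ℝ) * t⌉₊ with hsdef
      have hs_le : s ≤ 99 * t / 100 + 1 := hceil_le t
      have hst : s < t := by omega
      have h1 := H t ht
      have hexp : t + 200 * s ≤ 200 * t := by omega
      by_cases hcase : t₁ ≤ s
      · have h2 := ih s hst hcase
        have h3 : (f t : ℝ) < (1.001 : ℝ) ^ t * ((1.001 : ℝ) ^ (200 * s) * M) :=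
          lt_of_lt_of_le h1 (mul_le_mul_of_nonneg_left h2.le (by positivity))
        calc (f t : ℝ) < (1.001 : ℝ) ^ t * ((1.001 : ℝ) ^ (200 * s) * M) := h3
        _ = (1.001 : ℝ) ^ (t + 200 * s) * M := by rw [pow_add]; ring
        _ ≤ (1.001 : ℝ) ^ (200 * t) * M :=
            mul_le_mul_of_nonneg_right (pow_le_pow_right₀ (by norm_num) hexp) hMpos.le
      · have hfs : (f s : ℝ) ≤ M := by
          have : f s ≤ M₀ := Finset.le_sup (Finset.mem_range.2 (by omega))
          have : (f s : ℝ) ≤ (M₀ : ℝ) := by exact_mod_cast this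
          linarith
        calc (f t : ℝ) < (1.001 : ℝ) ^ t * f s := h1
        _ ≤ (1.001 : ℝ) ^ t * M := mul_le_mul_of_nonneg_left hfs (by positivity)
        _ ≤ (1.001 : ℝ) ^ (200 * t) * M :=
            mul_le_mul_of_nonneg_right (pow_le_pow_right₀ (by norm_num) (by omega)) hMpos.le
  have low : ∀ T, t₁ ≤ T → 2 ^ ((T - 3) / 2) < f T := by
    intro T hT
    exact two_pow_lt_ramsey2 (le_trans ht₁200 hT) (hpos T hT)
  set b : ℝ := (1.001 : ℝ) ^ 200 with hbdef
  have hbpos : (0 : ℝ) < b := by positivity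
  have hb2 : b ^ 2 < 2 := by rw [hbdef, ← pow_mul]; norm_num; rw [div_pow, div_lt_iff₀ (by positivity)]; norm_cast
  have ha : (1 : ℝ) < 2 / b ^ 2 := by
    rw [lt_div_iff₀ (by positivity)]
    linarith
  obtain ⟨N, hN⟩ := pow_unbounded_of_one_lt (16 * M ^ 2) ha
  set T := max N t₁ with hTdef
  have hTt₁ : t₁ ≤ T := le_max_right _ _
  have hT200 : 200 ≤ T := le_trans ht₁200 hTt₁
  have l1 := low T hTt₁
  have u1 := up T hTt₁
  have c1 : (2 : ℝ) ^ ((T - 3) / 2) < b ^ T * M := by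
    have h2 : (f T : ℝ) < b ^ T * M := by
      rw [hbdef, ← pow_mul]
      exact u1
    calc (2 : ℝ) ^ ((T - 3) / 2) = ((2 ^ ((T - 3) / 2) : ℕ) : ℝ) := by push_cast; ring
    _ ≤ (f T : ℝ) := by exact_mod_cast l1.le
    _ < b ^ T * M := h2
  have c2 : (2 : ℝ) ^ T < 16 * (b ^ 2) ^ T * M ^ 2 := by
    have hsq : ((2 : ℝ) ^ ((T - 3) / 2)) ^ 2 < (b ^ T * M) ^ 2 := by
      apply pow_lt_pow_left₀ c1 (by positivity)
      norm_num
    have hTle : T ≤ 4 + 2 * ((T - 3) / 2) := by omega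
    have h4 : (2 : ℝ) ^ T ≤ (2 : ℝ) ^ (4 + 2 * ((T - 3) / 2)) :=
      pow_le_pow_right₀ (by norm_num) hTle
    have h5 : (2 : ℝ) ^ (4 + 2 * ((T - 3) / 2)) = 16 * ((2 : ℝ) ^ ((T - 3) / 2)) ^ 2 := by
      rw [pow_add, Nat.mul_comm 2 ((T - 3) / 2), pow_mul]
      norm_num
    have h6 : (b ^ T * M) ^ 2 = (b ^ 2) ^ T * M ^ 2 := by
      rw [mul_pow, ← pow_mul, Nat.mul_comm T 2, pow_mul]
    calc (2 : ℝ) ^ T ≤ 16 * ((2 : ℝ) ^ ((T - 3) / 2)) ^ 2 := le_trans h4 (le_of_eq h5)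
    _ < 16 * (b ^ T * M) ^ 2 := mul_lt_mul_of_pos_left hsq (by norm_num)
    _ = 16 * (b ^ 2) ^ T * M ^ 2 := by rw [h6]; ring
  have c3 : (2 / b ^ 2) ^ T < 16 * M ^ 2 := by
    rw [div_pow, div_lt_iff₀ (by positivity)]
    calc ((2 : ℝ)) ^ T < 16 * (b ^ 2) ^ T * M ^ 2 := c2
    _ = 16 * M ^ 2 * (b ^ 2) ^ T := by ring
  have c4 : (2 / b ^ 2) ^ N ≤ (2 / b ^ 2) ^ T :=
    pow_le_pow_right₀ ha.le (le_max_left _ _)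
  linarith
end

section
/- For all natural numbers k and l with 2k ≤ l, the binomial coefficient satisfies (C(k+l, k) : ℝ) ≤ 2^{k + 3l/4} · (5/3)^{l/4}, where the exponents 3l/4 and l/4 are real numbers. -/
open Real Finset

lemma choose_le_aux (k l : ℕ) : (((k + l).choose k : ℝ)) ≤ 4 ^ k * (4 / 3) ^ l := by
  have hterm : (1/4:ℝ)^k * (3/4)^l * ((k+l).choose k) ≤ 1 := by
    have h2 := add_pow (1/4 : ℝ) (3/4) (k+l)
    have hmem : k ∈ Finset.range (k+l+1) := by simp
    have := Finset.single_le_sum (f := fun i => (1/4:ℝ)^i * (3/4)^(k+l-i) * ((k+l).choose i))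
      (fun i _ => by positivity) hmem
    simp only [Nat.add_sub_cancel_left] at this
    calc (1/4:ℝ)^k * (3/4)^l * ((k+l).choose k)
        ≤ ∑ i ∈ Finset.range (k+l+1), (1/4:ℝ)^i * (3/4)^(k+l-i) * ((k+l).choose i) := this
      _ = (1/4 + 3/4 : ℝ)^(k+l) := h2.symm
      _ = 1 := by norm_num
  have key : (((k + l).choose k : ℝ)) = 4 ^ k * (4/3) ^ l * ((1/4:ℝ)^k * (3/4)^l * ((k+l).choose k)) := by
    rw [show (4:ℝ)^k * (4/3)^l * ((1/4:ℝ)^k * (3/4)^l * ((k+l).choose k))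
        = ((4:ℝ) * (1/4))^k * ((4/3) * (3/4))^l * ((k+l).choose k) by
      rw [mul_pow, mul_pow]; ring]
    norm_num
  rw [key]
  have hpos : (0:ℝ) ≤ 4 ^ k * (4/3) ^ l := by positivity
  nlinarith [hpos, hterm, mul_le_mul_of_nonneg_left hterm hpos]

/-- For `2k ≤ l`, `C(k+l, k) ≤ 2^{k + 3l/4} (5/3)^{l/4}`. -/
theorem choose_le_of_two_mul_le (k l : ℕ) (h : 2 * k ≤ l) :
    (((k + l).choose k : ℝ)) ≤
      (2 : ℝ) ^ ((k : ℝ) + 3 * (l : ℝ) / 4) * ((5 : ℝ) / 3) ^ ((l : ℝ) / 4) := by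
  have hkl : (k : ℝ) ≤ (l : ℝ) / 2 := by
    have : (2 * k : ℝ) ≤ l := by exact_mod_cast h
    linarith
  have hl4 : (0:ℝ) ≤ (l:ℝ)/4 := by positivity
  have A2 : (2:ℝ)^(2:ℝ) = 4 := by
    rw [show (2:ℝ) = ((2:ℕ):ℝ) by norm_num, rpow_natCast]; norm_num
  have A3 : (2:ℝ)^(3:ℝ) = 8 := by
    rw [show (3:ℝ) = ((3:ℕ):ℝ) by norm_num, rpow_natCast]; norm_num
  have A4 : ((4:ℝ)/3)^(4:ℝ) = 256/81 := by
    rw [show (4:ℝ) = ((4:ℕ):ℝ) by norm_num, rpow_natCast]; norm_num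
  have h81 : ((256:ℝ)/81)^((l:ℝ)/4) = ((4:ℝ)/3)^l := by
    rw [← A4, ← rpow_mul (by norm_num),
      show (4:ℝ)*((l:ℝ)/4) = ((l:ℕ):ℝ) by push_cast; ring, rpow_natCast]
  have h2k : (2:ℝ)^(2*(k:ℝ)) = 4^k := by
    rw [show (2*(k:ℝ)) = ((2*k:ℕ):ℝ) by push_cast; ring, rpow_natCast, pow_mul]; norm_num
  have hsplit : (2:ℝ)^((k:ℝ) + (l:ℝ)/2) = (2:ℝ)^(k:ℝ) * (4:ℝ)^((l:ℝ)/4) := by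
    rw [rpow_add two_pos, show ((l:ℝ)/2) = 2*((l:ℝ)/4) by ring,
      rpow_mul (by norm_num : (0:ℝ) ≤ 2), A2]
  have hmul1 : (4:ℝ)^((l:ℝ)/4) * ((256:ℝ)/81)^((l:ℝ)/4) = ((1024:ℝ)/81)^((l:ℝ)/4) := by
    rw [← mul_rpow (by norm_num) (by norm_num)]; norm_num
  have hfin : (2:ℝ)^((k:ℝ) + 3*(l:ℝ)/4) * ((5:ℝ)/3)^((l:ℝ)/4)
      = (2:ℝ)^(k:ℝ) * ((40:ℝ)/3)^((l:ℝ)/4) := by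
    rw [show ((k:ℝ) + 3*(l:ℝ)/4) = (k:ℝ) + 3*((l:ℝ)/4) by ring, rpow_add two_pos,
      rpow_mul (by norm_num : (0:ℝ) ≤ 2), A3, mul_assoc,
      ← mul_rpow (by norm_num) (by norm_num)]
    norm_num
  calc (((k + l).choose k : ℝ))
      ≤ 4 ^ k * (4 / 3) ^ l := choose_le_aux k l
    _ = (2:ℝ)^(2*(k:ℝ)) * ((256:ℝ)/81)^((l:ℝ)/4) := by rw [h2k, h81]
    _ ≤ (2:ℝ)^((k:ℝ) + (l:ℝ)/2) * ((256:ℝ)/81)^((l:ℝ)/4) := by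
        gcongr
        · exact one_le_two
        · linarith
    _ = (2:ℝ)^(k:ℝ) * ((1024:ℝ)/81)^((l:ℝ)/4) := by rw [hsplit, mul_assoc, hmul1]
    _ ≤ (2:ℝ)^(k:ℝ) * ((40:ℝ)/3)^((l:ℝ)/4) :=
        mul_le_mul_of_nonneg_left (rpow_le_rpow (by norm_num) (by norm_num) hl4)
          (by positivity)
    _ = (2 : ℝ) ^ ((k : ℝ) + 3 * (l : ℝ) / 4) * ((5 : ℝ) / 3) ^ ((l : ℝ) / 4) := hfin.symm
end

section
/- Let q ≥ 2 be an integer. For all sufficiently large positive integers t the following holds: let M and N be disjoint finite sets with |M| = ⌈6 · q^{t+1} · log t⌉ and |N| = 2qt², where log denotes the logarithm to the base q. Then every colouring of the edges of the complete bipartite graph between M and N with q colours contains a monochromatic complete bipartite subgraph with at least 3qt² vertices in M and at least ⌈t - 2·log t⌉ vertices in N. -/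
set_option maxHeartbeats 1000000

open Finset Real

private lemma choose_ratio_aux (n m s : ℕ) (hsm : s ≤ m) (hmn : m ≤ n) :
    n.choose s * (m - s) ^ s ≤ n ^ s * m.choose s := by
  have h1 : n.descFactorial s * (m - s) ^ s ≤ n ^ s * m.descFactorial s := by
    rw [Nat.descFactorial_eq_prod_range, Nat.descFactorial_eq_prod_range]
    calc (∏ i ∈ range s, (n - i)) * (m - s) ^ s
        = ∏ i ∈ range s, (n - i) * (m - s) := by
          rw [prod_mul_distrib, prod_const, card_range]
      _ ≤ ∏ i ∈ range s, n * (m - i) := by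
          refine prod_le_prod' fun i hi => ?_
          exact Nat.mul_le_mul (Nat.sub_le n i)
            (Nat.sub_le_sub_left (le_of_lt (mem_range.mp hi)) m)
      _ = n ^ s * ∏ i ∈ range s, (m - i) := by
          rw [prod_mul_distrib, prod_const, card_range]
  rw [Nat.descFactorial_eq_factorial_mul_choose, Nat.descFactorial_eq_factorial_mul_choose] at h1
  have h2 : s.factorial * (n.choose s * (m - s) ^ s) ≤ s.factorial * (n ^ s * m.choose s) := by
    calc s.factorial * (n.choose s * (m - s) ^ s) = s.factorial * n.choose s * (m - s) ^ s := by ring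
      _ ≤ n ^ s * (s.factorial * m.choose s) := h1
      _ = s.factorial * (n ^ s * m.choose s) := by ring
  exact Nat.le_of_mul_le_mul_left h2 (Nat.factorial_pos s)


private lemma numeric_real (q t : ℕ) (hq : 2 ≤ q) (h64 : 64 ≤ t) (hqt : q ^ q ^ 2 ≤ t) :
    (3 * (q:ℝ)^2 * (t:ℝ)^2) * ((2*(q:ℝ)*(t:ℝ)^2) ^ (⌈(t:ℝ) - 2 * Real.logb q t⌉₊))
      ≤ (⌈6 * (q:ℝ) ^ (t + 1) * Real.logb q t⌉₊ : ℝ)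
        * ((2*(t:ℝ)^2 - (⌈(t:ℝ) - 2 * Real.logb q t⌉₊ : ℝ)) ^ (⌈(t:ℝ) - 2 * Real.logb q t⌉₊)) := by
  have hq1 : (1:ℝ) < q := by exact_mod_cast hq.trans_lt' one_lt_two
  have hqpos : (0:ℝ) < q := by linarith
  have hT1 : (1:ℝ) ≤ t := by exact_mod_cast le_trans (by norm_num) h64
  have hTpos : (0:ℝ) < t := by linarith
  set L : ℝ := Real.logb q t with hLdef
  set s : ℕ := ⌈(t:ℝ) - 2 * L⌉₊ with hsdef
  have hL0 : 0 ≤ L := Real.logb_nonneg hq1 hT1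
  -- L ≥ q^2
  have hLq : (q:ℝ)^2 ≤ L := by
    have h1 : ((q:ℝ)) ^ (((q^2 : ℕ)) : ℝ) ≤ (t:ℝ) := by
      rw [Real.rpow_natCast]; exact_mod_cast hqt
    have h1' : (q:ℝ) ^ ((q:ℝ)^2) ≤ (t:ℝ) := by push_cast at h1; exact h1
    calc (q:ℝ)^2 = Real.logb q ((q:ℝ) ^ ((q:ℝ)^2)) := by
          rw [Real.logb_rpow hqpos hq1.ne']
      _ ≤ L := Real.logb_le_logb_of_le hq1 (Real.rpow_pos_of_pos hqpos _) h1'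
  -- 2L ≤ t
  have hsqnn : (0:ℝ) ≤ Real.sqrt t := Real.sqrt_nonneg _
  have hsq8 : (8:ℝ) ≤ Real.sqrt t := by
    rw [show (8:ℝ) = Real.sqrt 64 by
      rw [show (64:ℝ) = 8^2 by norm_num, Real.sqrt_sq (by norm_num)]]
    exact Real.sqrt_le_sqrt (by exact_mod_cast h64)
  have hlogt : Real.log t ≤ 2 * Real.sqrt t := by
    have h1 : Real.log (Real.sqrt t) ≤ Real.sqrt t - 1 :=
      Real.log_le_sub_one_of_pos (by positivity)
    have h2 : Real.log (Real.sqrt t) = Real.log t / 2 := Real.log_sqrt (by positivity)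
    linarith
  have hlog2 : (1:ℝ)/2 ≤ Real.log q := by
    have h9 := Real.log_two_gt_d9
    have h3 : Real.log 2 ≤ Real.log q := Real.log_le_log (by norm_num) (by exact_mod_cast hq)
    linarith
  have hlogq0 : (0:ℝ) < Real.log q := by linarith
  have hlt0 : 0 ≤ Real.log t := Real.log_nonneg hT1
  have hL4 : L ≤ 4 * Real.sqrt t := by
    rw [hLdef, Real.logb, div_le_iff₀ hlogq0]
    nlinarith
  have h2L : 2 * L ≤ t := by
    have hms := Real.mul_self_sqrt (le_of_lt hTpos)
    nlinarith
  -- facts about s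
  have hs_le_t : s ≤ t := by
    have h1 : ((t:ℝ) - 2*L) ≤ ((t:ℕ):ℝ) := by linarith
    calc s ≤ ⌈((t:ℕ):ℝ)⌉₊ := Nat.ceil_le_ceil h1
      _ = t := Nat.ceil_natCast t
  have hsT : (s:ℝ) ≤ (t:ℝ) := by exact_mod_cast hs_le_t
  have hs_real : (s:ℝ) ≤ (t:ℝ) - 2*L + 1 := (Nat.ceil_lt_add_one (by linarith)).le
  -- q^s * t^2 ≤ q^(t+1)
  have hQs : (q:ℝ)^s * (t:ℝ)^2 ≤ (q:ℝ)^(t+1) := by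
    have e1 : (q:ℝ)^((s:ℕ):ℝ) ≤ (q:ℝ)^(((t:ℝ)+1) - 2*L) :=
      Real.rpow_le_rpow_of_exponent_le hq1.le (by push_cast; linarith)
    have e2 : (q:ℝ)^(((t:ℝ)+1) - 2*L) = (q:ℝ)^((t:ℝ)+1) / (q:ℝ)^(2*L) :=
      Real.rpow_sub hqpos _ _
    have e3 : (q:ℝ)^(2*L) = (t:ℝ)^2 := by
      rw [mul_comm, Real.rpow_mul hqpos.le, Real.rpow_logb hqpos hq1.ne' hTpos,
        show (2:ℝ) = ((2:ℕ):ℝ) by norm_num, Real.rpow_natCast]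
    have e4 : (q:ℝ)^((t:ℝ)+1) = (q:ℝ)^(t+1 : ℕ) := by
      rw [← Real.rpow_natCast (q:ℝ) (t+1)]
      push_cast
      ring_nf
    rw [Real.rpow_natCast, e2, e3, e4] at e1
    have ht2 : (0:ℝ) < (t:ℝ)^2 := by positivity
    calc (q:ℝ)^s * (t:ℝ)^2 ≤ ((q:ℝ)^(t+1 : ℕ) / (t:ℝ)^2) * (t:ℝ)^2 :=
          mul_le_mul_of_nonneg_right e1 (le_of_lt ht2)
      _ = (q:ℝ)^(t+1 : ℕ) := div_mul_cancel₀ _ (ne_of_gt ht2)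
  -- Bernoulli
  have hinv : (0:ℝ) ≤ 1/(2*(t:ℝ)) := by positivity
  have hinv1 : 1/(2*(t:ℝ)) ≤ 1 := by
    rw [div_le_one (by linarith)]; linarith
  have hbase0 : (0:ℝ) ≤ 1 - 1/(2*(t:ℝ)) := by linarith
  have hhalf : (1/2 : ℝ) ≤ (1 - 1/(2*(t:ℝ)))^t := by
    have hb := one_add_mul_le_pow (show (-2:ℝ) ≤ -(1/(2*(t:ℝ))) by linarith) t
    have he : 1 + (t:ℝ) * (-(1/(2*(t:ℝ)))) = 1/2 := by
      field_simp
      ring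
    calc (1/2:ℝ) = 1 + (t:ℝ) * (-(1/(2*(t:ℝ)))) := he.symm
      _ ≤ (1 + -(1/(2*(t:ℝ))))^t := hb
      _ = (1 - 1/(2*(t:ℝ)))^t := by ring_nf
  have hpow_st : (1 - 1/(2*(t:ℝ)))^t ≤ (1 - 1/(2*(t:ℝ)))^s :=
    pow_le_pow_of_le_one hbase0 (by linarith) hs_le_t
  have hfac : (2*(t:ℝ)^2) * (1 - 1/(2*(t:ℝ))) = 2*(t:ℝ)^2 - (t:ℝ) := by
    field_simp
  have hkey2 : (2*(t:ℝ)^2)^s * (1/2) ≤ (2*(t:ℝ)^2 - (s:ℝ))^s := by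
    calc (2*(t:ℝ)^2)^s * (1/2)
        ≤ (2*(t:ℝ)^2)^s * ((1 - 1/(2*(t:ℝ)))^s) :=
          mul_le_mul_of_nonneg_left (le_trans hhalf hpow_st) (by positivity)
      _ = (2*(t:ℝ)^2 - (t:ℝ))^s := by rw [← mul_pow, hfac]
      _ ≤ (2*(t:ℝ)^2 - (s:ℝ))^s := pow_le_pow_left₀ (by nlinarith) (by linarith) s
  have hms_nn : (0:ℝ) ≤ 2*(t:ℝ)^2 - (s:ℝ) := by nlinarith
  have hm0 : 6 * (q:ℝ)^(t+1) * L ≤ (⌈6 * (q:ℝ)^(t+1) * L⌉₊ : ℝ) := Nat.le_ceil _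
  have hsplit : (2*(q:ℝ)*(t:ℝ)^2)^s = (q:ℝ)^s * (2*(t:ℝ)^2)^s := by
    rw [← mul_pow]
    congr 1
    ring
  calc (3*(q:ℝ)^2*(t:ℝ)^2) * ((2*(q:ℝ)*(t:ℝ)^2)^s)
      = 3*(q:ℝ)^2 * (((q:ℝ)^s * (t:ℝ)^2) * (2*(t:ℝ)^2)^s) := by rw [hsplit]; ring
    _ ≤ 3*(q:ℝ)^2 * ((q:ℝ)^(t+1) * (2*(t:ℝ)^2)^s) := by
        apply mul_le_mul_of_nonneg_left
          (mul_le_mul_of_nonneg_right hQs (by positivity)) (by positivity)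
    _ ≤ 3*L * ((q:ℝ)^(t+1) * (2*(t:ℝ)^2)^s) := by
        apply mul_le_mul_of_nonneg_right _ (by positivity)
        linarith
    _ = (6*(q:ℝ)^(t+1)*L) * ((2*(t:ℝ)^2)^s * (1/2)) := by ring
    _ ≤ (6*(q:ℝ)^(t+1)*L) * ((2*(t:ℝ)^2 - (s:ℝ))^s) := by
        apply mul_le_mul_of_nonneg_left hkey2 (by positivity)
    _ ≤ (⌈6 * (q:ℝ)^(t+1) * L⌉₊ : ℝ) * ((2*(t:ℝ)^2 - (s:ℝ))^s) :=
        mul_le_mul_of_nonneg_right hm0 (pow_nonneg hms_nn s)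

private lemma numeric_nat (q t : ℕ) (hq : 2 ≤ q) (h64 : 64 ≤ t) (hqt : q ^ q ^ 2 ≤ t) :
    3*q*t^2 * (q * (2*q*t^2).choose (⌈(t:ℝ) - 2 * Real.logb q t⌉₊))
      ≤ ⌈6 * (q:ℝ) ^ (t + 1) * Real.logb q t⌉₊
        * (2*t^2).choose (⌈(t:ℝ) - 2 * Real.logb q t⌉₊) := by
  have hq1 : (1:ℝ) < q := by exact_mod_cast hq.trans_lt' one_lt_two
  have ht1 : 1 ≤ t := le_trans (by norm_num) h64
  have hT1 : (1:ℝ) ≤ t := by exact_mod_cast ht1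
  set L : ℝ := Real.logb q t with hLdef
  set s : ℕ := ⌈(t:ℝ) - 2 * L⌉₊ with hsdef
  set m0 : ℕ := ⌈6 * (q:ℝ) ^ (t + 1) * L⌉₊ with hm0def
  have hL0 : 0 ≤ L := Real.logb_nonneg hq1 hT1
  have hs_le_t : s ≤ t := by
    have h1 : ((t:ℝ) - 2*L) ≤ ((t:ℕ):ℝ) := by linarith
    calc s ≤ ⌈((t:ℕ):ℝ)⌉₊ := Nat.ceil_le_ceil h1
      _ = t := Nat.ceil_natCast t
  have ht2t : t < 2*t^2 := by nlinarith
  have hs2t : s ≤ 2*t^2 := le_trans hs_le_t (le_of_lt ht2t)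
  have key := numeric_real q t hq h64 hqt
  have hrn : 3*q^2*t^2 * (2*q*t^2)^s ≤ m0 * (2*t^2 - s)^s := by
    have h' : ((3*q^2*t^2 * (2*q*t^2)^s : ℕ) : ℝ) ≤ ((m0 * (2*t^2 - s)^s : ℕ) : ℝ) := by
      push_cast [Nat.cast_sub hs2t]
      linarith [key]
    exact_mod_cast h'
  have hratio := choose_ratio_aux (2*q*t^2) (2*t^2) s hs2t (by nlinarith)
  have hpos : 0 < (2*t^2 - s)^s := by
    have : 0 < 2*t^2 - s := Nat.sub_pos_of_lt (lt_of_le_of_lt hs_le_t ht2t)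
    positivity
  have main : 3*q*t^2 * (q * (2*q*t^2).choose s) * (2*t^2 - s)^s
      ≤ m0 * (2*t^2).choose s * (2*t^2 - s)^s := by
    calc 3*q*t^2 * (q * (2*q*t^2).choose s) * (2*t^2 - s)^s
        = 3*q^2*t^2 * ((2*q*t^2).choose s * (2*t^2 - s)^s) := by ring
      _ ≤ 3*q^2*t^2 * ((2*q*t^2)^s * (2*t^2).choose s) := Nat.mul_le_mul_left _ hratio
      _ = (3*q^2*t^2 * (2*q*t^2)^s) * (2*t^2).choose s := by ring
      _ ≤ (m0 * (2*t^2 - s)^s) * (2*t^2).choose s := Nat.mul_le_mul_right _ hrn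
      _ = m0 * (2*t^2).choose s * (2*t^2 - s)^s := by ring
  exact Nat.le_of_mul_le_mul_right main hpos

/-- For `q ≥ 2` and all sufficiently large `t`: every `q`-colouring of the complete
bipartite graph between a set `M` of size `⌈6 q^{t+1} log_q t⌉` and a set `N` of size
`2 q t²` contains a monochromatic complete bipartite subgraph with at least `3 q t²`
vertices in `M` and at least `⌈t - 2 log_q t⌉` vertices in `N`. -/
theorem mono_complete_bipartite_first_phase (q : ℕ) (hq : 2 ≤ q) :
    ∃ t₀ : ℕ, ∀ t : ℕ, t₀ ≤ t →
      ∀ c : Fin ⌈6 * (q : ℝ) ^ (t + 1) * Real.logb q t⌉₊ → Fin (2 * q * t ^ 2) → Fin q,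
        ∃ i : Fin q,
          ∃ M' : Finset (Fin ⌈6 * (q : ℝ) ^ (t + 1) * Real.logb q t⌉₊),
            ∃ N' : Finset (Fin (2 * q * t ^ 2)),
              3 * q * t ^ 2 ≤ M'.card ∧
              ⌈(t : ℝ) - 2 * Real.logb q t⌉₊ ≤ N'.card ∧
              ∀ a ∈ M', ∀ b ∈ N', c a b = i := by
  classical
  refine ⟨64 + q ^ q ^ 2, ?_⟩
  intro t ht c
  have h64 : 64 ≤ t := by omega
  have hqt : q ^ q ^ 2 ≤ t := by omega
  have ht1 : 1 ≤ t := by omega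
  revert c
  set m0 : ℕ := ⌈6 * (q : ℝ) ^ (t + 1) * Real.logb q t⌉₊ with hm0def
  set s : ℕ := ⌈(t : ℝ) - 2 * Real.logb q t⌉₊ with hsdef
  intro c
  -- s ≤ number of vertices in N
  have hq1 : (1:ℝ) < q := by exact_mod_cast hq.trans_lt' one_lt_two
  have hT1 : (1:ℝ) ≤ t := by exact_mod_cast ht1
  have hL0 : 0 ≤ Real.logb q t := Real.logb_nonneg hq1 hT1
  have hs_le_t : s ≤ t := by
    have h1 : ((t:ℝ) - 2 * Real.logb q t) ≤ ((t:ℕ):ℝ) := by linarith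
    calc s ≤ ⌈((t:ℕ):ℝ)⌉₊ := Nat.ceil_le_ceil h1
      _ = t := Nat.ceil_natCast t
  have hsn : s ≤ 2 * q * t ^ 2 := le_trans hs_le_t (by nlinarith)
  -- majority colour for each vertex of M
  have fiber : ∀ a : Fin m0, ∃ i : Fin q,
      2 * t ^ 2 ≤ (Finset.univ.filter fun b => c a b = i).card := by
    intro a
    have hcard : (Finset.univ : Finset (Fin (2 * q * t ^ 2))).card
        = ∑ i : Fin q, (Finset.univ.filter fun b => c a b = i).card :=
      Finset.card_eq_sum_card_fiberwise (fun b _ => Finset.mem_univ (c a b))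
    have hne : (Finset.univ : Finset (Fin q)).Nonempty :=
      ⟨⟨0, by omega⟩, Finset.mem_univ _⟩
    have hsum : ∑ _i : Fin q, 2 * t ^ 2
        ≤ ∑ i : Fin q, (Finset.univ.filter fun b => c a b = i).card := by
      rw [← hcard]
      simp only [Finset.sum_const, Finset.card_univ, Fintype.card_fin, smul_eq_mul,
        Finset.card_fin]
      ring_nf
      omega
    obtain ⟨i, _, hi⟩ := Finset.exists_le_of_sum_le hne hsum
    exact ⟨i, hi⟩
  choose col hcol using fiber
  -- the family of candidate pairs (colour, s-subset of N)
  set P : Finset (Fin q × Finset (Fin (2 * q * t ^ 2))) :=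
    Finset.univ ×ˢ Finset.univ.powersetCard s with hPdef
  have hPcard : P.card = q * (2 * q * t ^ 2).choose s := by
    rw [hPdef, Finset.card_product, Finset.card_powersetCard, Finset.card_univ,
      Finset.card_univ, Fintype.card_fin, Fintype.card_fin]
  -- per-vertex count
  have hvert : ∀ a : Fin m0, (2 * t ^ 2).choose s
      ≤ (P.filter fun p => ∀ b ∈ p.2, c a b = p.1).card := by
    intro a
    calc (2 * t ^ 2).choose s
        ≤ (Finset.univ.filter fun b => c a b = col a).card.choose s :=
          Nat.choose_le_choose s (hcol a)
      _ = ((Finset.univ.filter fun b => c a b = col a).powersetCard s).card :=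
          (Finset.card_powersetCard s _).symm
      _ ≤ (P.filter fun p => ∀ b ∈ p.2, c a b = p.1).card := by
          apply Finset.card_le_card_of_injOn (fun S => (col a, S))
          · intro S hS
            rw [Finset.mem_coe, Finset.mem_powersetCard] at hS
            rw [Finset.mem_coe, Finset.mem_filter]
            refine ⟨?_, fun b hb => (Finset.mem_filter.mp (hS.1 hb)).2⟩
            rw [hPdef, Finset.mem_product]
            exact ⟨Finset.mem_univ _,
              Finset.mem_powersetCard.mpr ⟨Finset.subset_univ _, hS.2⟩⟩
          · intro S _ S' _ h
            exact congrArg Prod.snd h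
  -- double counting
  have hswap : ∑ p ∈ P, (Finset.univ.filter fun a : Fin m0 => ∀ b ∈ p.2, c a b = p.1).card
      = ∑ a : Fin m0, (P.filter fun p => ∀ b ∈ p.2, c a b = p.1).card := by
    simp_rw [Finset.card_filter]
    rw [Finset.sum_comm]
  have htotal : ∑ p ∈ P, (3 * q * t ^ 2)
      ≤ ∑ p ∈ P, (Finset.univ.filter fun a : Fin m0 => ∀ b ∈ p.2, c a b = p.1).card := by
    rw [hswap]
    calc ∑ _p ∈ P, (3 * q * t ^ 2) = P.card * (3 * q * t ^ 2) := by
          rw [Finset.sum_const, smul_eq_mul]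
      _ = 3 * q * t ^ 2 * (q * (2 * q * t ^ 2).choose s) := by rw [hPcard]; ring
      _ ≤ m0 * (2 * t ^ 2).choose s := numeric_nat q t hq h64 hqt
      _ = ∑ _a : Fin m0, (2 * t ^ 2).choose s := by
          rw [Finset.sum_const, Finset.card_univ, Fintype.card_fin, smul_eq_mul]
      _ ≤ ∑ a : Fin m0, (P.filter fun p => ∀ b ∈ p.2, c a b = p.1).card :=
          Finset.sum_le_sum (f := fun _ => (2 * t ^ 2).choose s) fun a _ => hvert a
  have hPne : P.Nonempty := by
    obtain ⟨S, hS⟩ := Finset.powersetCard_nonempty.mpr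
      (by rw [Finset.card_univ, Fintype.card_fin]; exact hsn :
        s ≤ (Finset.univ : Finset (Fin (2 * q * t ^ 2))).card)
    exact ⟨(⟨0, by omega⟩, S), by rw [hPdef, Finset.mem_product]; exact ⟨Finset.mem_univ _, hS⟩⟩
  obtain ⟨p, hpP, hp⟩ := Finset.exists_le_of_sum_le hPne htotal
  refine ⟨p.1, Finset.univ.filter fun a => ∀ b ∈ p.2, c a b = p.1, p.2, hp, ?_, ?_⟩
  · rw [hPdef, Finset.mem_product] at hpP
    rw [(Finset.mem_powersetCard.mp hpP.2).2]
  · intro a ha b hb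
    exact (Finset.mem_filter.mp ha).2 b hb
end
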